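/- arXiv:2509.02892 — 4 statements merged into one kernel-verified Lean document; each statement's English description precedes it below -/
import Mathlib

section
/- Under unconfoundedness given X, consistency, and positivity given X, the conditional mean of each potential outcome is identified from observables: for each t ∈ {0,1}, P-almost surely E[Y_t | σ(X)] · E[1{T=t} | σ(X)] = E[Y · 1{T=t} | σ(X)], equivalently E[Y_t | σ(X)] = E[Y · 1{T=t} | σ(X)] / E[1{T=t} | σ(X)]. -/
open MeasureTheory ProbabilityTheory

noncomputable section

/-- The real-valued indicator of the event `T = t` for a binary treatment `T`. -/
def indicT {Ω : Type*} (T : Ω → Bool) (t : Bool) : Ω → ℝ :=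
  fun ω => if T ω = t then 1 else 0

/-- The adjustment-formula ATE of a triple (covariates `X`, binary treatment `T`, outcome `Y`):
`E[ E[Y·1{T=1} | σ(X)] / E[1{T=1} | σ(X)] − E[Y·1{T=0} | σ(X)] / E[1{T=0} | σ(X)] ]`. -/
def adjATE {Ω β : Type*} [MeasurableSpace Ω] [MeasurableSpace β]
    (μ : Measure Ω) (X : Ω → β) (T : Ω → Bool) (Y : Ω → ℝ) : ℝ :=
  ∫ ω,
    ((μ[fun ω' => Y ω' * indicT T true ω' | MeasurableSpace.comap X inferInstance]) ω
        / (μ[indicT T true | MeasurableSpace.comap X inferInstance]) ω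
      - (μ[fun ω' => Y ω' * indicT T false ω' | MeasurableSpace.comap X inferInstance]) ω
        / (μ[indicT T false | MeasurableSpace.comap X inferInstance]) ω) ∂μ

/-- Positivity given `X`: `0 < E[1{T=1} | σ(X)] < 1` almost surely. -/
def PositivityGiven {Ω β : Type*} [MeasurableSpace Ω] [MeasurableSpace β]
    (μ : Measure Ω) (X : Ω → β) (T : Ω → Bool) : Prop :=
  ∀ᵐ ω ∂μ, 0 < (μ[indicT T true | MeasurableSpace.comap X inferInstance]) ω ∧
    (μ[indicT T true | MeasurableSpace.comap X inferInstance]) ω < 1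

end

open Set in
lemma key_lemma {Ω : Type*} {m : MeasurableSpace Ω} {mΩ : MeasurableSpace Ω} [StandardBorelSpace Ω]
    [Nonempty Ω] (hm : m ≤ mΩ) (μ : Measure Ω) [IsProbabilityMeasure μ]
    {Z : Ω → ℝ} (hZmeas : Measurable Z) (hZ : Integrable Z μ)
    {T : Ω → Bool} (hT : Measurable T) (t : Bool)
    (hindep : CondIndepFun m hm Z T (μ := μ)) :
    ∀ᵐ ω ∂μ, (μ[Z|m]) ω * (μ[indicT T t|m]) ω = (μ[fun ω' => Z ω' * indicT T t ω'|m]) ω := by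
  set A : Set Ω := T ⁻¹' {t} with hA_def
  have hA : MeasurableSet A := hT (measurableSet_singleton t)
  have hind_eq : indicT T t = A.indicator (fun _ => (1:ℝ)) := by
    funext ω
    by_cases h : T ω = t <;> simp [indicT, h, A, Set.indicator_apply]
  have hprod_eq : (fun ω' => Z ω' * indicT T t ω') = A.indicator Z := by
    funext ω
    by_cases h : T ω = t <;> simp [indicT, h, A, Set.indicator_apply]
  rw [hprod_eq, hind_eq]
  -- a.e. factorization on Iic of rationals
  have h1 : ∀ q : ℚ, ∀ᵐ ω ∂(μ.trim hm),
      condExpKernel μ m ω (Z ⁻¹' Iic (q:ℝ) ∩ A) =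
        condExpKernel μ m ω (Z ⁻¹' Iic (q:ℝ)) * condExpKernel μ m ω A := by
    intro q
    exact hindep _ _ ⟨Iic (q:ℝ), measurableSet_Iic, rfl⟩ ⟨{t}, measurableSet_singleton t, rfl⟩
  have h2 : ∀ᵐ ω ∂(μ.trim hm), ∀ q : ℚ,
      condExpKernel μ m ω (Z ⁻¹' Iic (q:ℝ) ∩ A) =
        condExpKernel μ m ω (Z ⁻¹' Iic (q:ℝ)) * condExpKernel μ m ω A := ae_all_iff.2 h1
  have h3 := ae_of_ae_trim hm h2
  have hZk := condExp_ae_eq_integral_condExpKernel (μ := μ) hm hZ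
  have hIk := condExp_ae_eq_integral_condExpKernel (μ := μ) hm
    ((integrable_const (1:ℝ)).indicator hA)
  have hPk := condExp_ae_eq_integral_condExpKernel (μ := μ) hm (hZ.indicator hA)
  filter_upwards [h3, hZk, hIk, hPk] with ω hω hZω hIω hPω
  rw [hZω, hIω, hPω]
  have hPr : IsProbabilityMeasure (condExpKernel μ m ω) := inferInstance
  -- measure map equality
  have hmap : Measure.map Z ((condExpKernel μ m ω).restrict A)
      = condExpKernel μ m ω A • Measure.map Z (condExpKernel μ m ω) := by
    have hfin1 : IsFiniteMeasure (Measure.map Z ((condExpKernel μ m ω).restrict A)) :=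
      inferInstance
    have hfin2 : IsFiniteMeasure (condExpKernel μ m ω A • Measure.map Z (condExpKernel μ m ω)) := by
      constructor
      rw [Measure.smul_apply, smul_eq_mul]
      exact ENNReal.mul_lt_top (measure_lt_top _ _) (measure_lt_top _ _)
    refine ext_of_generate_finite _ (BorelSpace.measurable_eq.trans
      Real.borel_eq_generateFrom_Iic_rat) Real.isPiSystem_Iic_rat ?_ ?_
    · rintro s hs
      simp only [Set.mem_iUnion, Set.mem_singleton_iff] at hs
      obtain ⟨q, rfl⟩ := hs
      rw [Measure.map_apply hZmeas measurableSet_Iic,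
        Measure.restrict_apply (hZmeas measurableSet_Iic), Measure.smul_apply,
        Measure.map_apply hZmeas measurableSet_Iic, smul_eq_mul, hω q, mul_comm]
    · rw [Measure.map_apply hZmeas MeasurableSet.univ, Set.preimage_univ,
        Measure.restrict_apply_univ, Measure.smul_apply,
        Measure.map_apply hZmeas MeasurableSet.univ, Set.preimage_univ,
        smul_eq_mul, measure_univ, mul_one]
  have hI : ∫ y, A.indicator (fun _ => (1:ℝ)) y ∂(condExpKernel μ m ω)
      = (condExpKernel μ m ω A).toReal := by
    rw [integral_indicator_const (1:ℝ) hA, smul_eq_mul, mul_one, measureReal_def]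
  rw [hI]
  have hP : ∫ y, A.indicator Z y ∂(condExpKernel μ m ω)
      = (condExpKernel μ m ω A).toReal * ∫ y, Z y ∂(condExpKernel μ m ω) := by
    rw [integral_indicator hA]
    calc ∫ y in A, Z y ∂(condExpKernel μ m ω)
        = ∫ x, id x ∂(Measure.map Z ((condExpKernel μ m ω).restrict A)) := by
          rw [integral_map hZmeas.aemeasurable aestronglyMeasurable_id]
          simp only [id_eq]
      _ = ∫ x, id x ∂(condExpKernel μ m ω A • Measure.map Z (condExpKernel μ m ω)) := by
          rw [hmap]
      _ = (condExpKernel μ m ω A).toReal * ∫ x, id x ∂(Measure.map Z (condExpKernel μ m ω)) := by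
          rw [integral_smul_measure, smul_eq_mul]
      _ = (condExpKernel μ m ω A).toReal * ∫ y, Z y ∂(condExpKernel μ m ω) := by
          rw [integral_map hZmeas.aemeasurable aestronglyMeasurable_id]
          simp only [id_eq]
  rw [hP, mul_comm]

open Set in
lemma general_lemma {Ω : Type*} {m : MeasurableSpace Ω} {mΩ : MeasurableSpace Ω}
    [StandardBorelSpace Ω] [Nonempty Ω] (hm : m ≤ mΩ)
    (μ : Measure Ω) [IsProbabilityMeasure μ]
    (T : Ω → Bool) (Y0 Y1 Y : Ω → ℝ) (hT : Measurable T)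
    (hY0 : Integrable Y0 μ) (hY1 : Integrable Y1 μ)
    (hunconf : CondIndepFun m hm (fun ω => (Y0 ω, Y1 ω)) T (μ := μ))
    (hpos : ∀ᵐ ω ∂μ, 0 < (μ[indicT T true|m]) ω ∧ (μ[indicT T true|m]) ω < 1)
    (hY : Y = fun ω => if T ω then Y1 ω else Y0 ω) :
    ∀ t : Bool,
      (∀ᵐ ω ∂μ,
        (μ[if t then Y1 else Y0 | m]) ω * (μ[indicT T t | m]) ω
          = (μ[fun ω' => Y ω' * indicT T t ω' | m]) ω) ∧
      (∀ᵐ ω ∂μ,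
        (μ[if t then Y1 else Y0 | m]) ω
          = (μ[fun ω' => Y ω' * indicT T t ω' | m]) ω / (μ[indicT T t | m]) ω) := by
  -- measurable versions of Y0 Y1
  set Y0' := hY0.1.mk Y0 with hY0'_def
  set Y1' := hY1.1.mk Y1 with hY1'_def
  have hY0'meas : Measurable Y0' := hY0.1.stronglyMeasurable_mk.measurable
  have hY1'meas : Measurable Y1' := hY1.1.stronglyMeasurable_mk.measurable
  have hY0'ae : Y0 =ᵐ[μ] Y0' := hY0.1.ae_eq_mk
  have hY1'ae : Y1 =ᵐ[μ] Y1' := hY1.1.ae_eq_mk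
  have hY0'int : Integrable Y0' μ := hY0.congr hY0'ae
  have hY1'int : Integrable Y1' μ := hY1.congr hY1'ae
  -- transfer conditional independence to the measurable versions
  have hPae : (fun ω => (Y0 ω, Y1 ω)) =ᵐ[μ] (fun ω => (Y0' ω, Y1' ω)) := by
    filter_upwards [hY0'ae, hY1'ae] with ω h0 h1
    simp [h0, h1]
  obtain ⟨N, hNsub, hNmeas, hNnull⟩ :=
    exists_measurable_superset_of_null (ae_iff.1 hPae)
  have hκN : ∀ᵐ ω ∂μ, condExpKernel μ m ω N = 0 := by
    have h1 := condExpKernel_ae_eq_condExp (μ := μ) hm hNmeas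
    have h2 : (μ⟦N | m⟧) =ᵐ[μ] 0 := by
      have hind : N.indicator (fun _ => (1:ℝ)) =ᵐ[μ] 0 := by
        have : ∀ᵐ ω ∂μ, ω ∉ N := by
          rw [ae_iff]
          simpa using hNnull
        filter_upwards [this] with ω hω
        simp [Set.indicator_apply, hω]
      have h3 := condExp_congr_ae (m := m) (μ := μ) hind
      rwa [condExp_zero] at h3
    filter_upwards [h1.trans h2] with ω hω
    have hne : condExpKernel μ m ω N ≠ ⊤ := measure_ne_top _ _
    simpa [measureReal_def, ENNReal.toReal_eq_zero_iff, hne] using hω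
  have hκN' : ∀ᵐ ω ∂(μ.trim hm), condExpKernel μ m ω N = 0 := by
    rw [ae_iff]
    have hms : MeasurableSet[m] {ω | ¬ condExpKernel μ m ω N = 0} :=
      (measurable_condExpKernel hNmeas (measurableSet_singleton 0)).compl
    rw [trim_measurableSet_eq hm hms]
    exact ae_iff.1 hκN
  have hunconf' : CondIndepFun m hm (fun ω => (Y0' ω, Y1' ω)) T (μ := μ) := by
    refine Kernel.IndepFun.congr' hunconf ?_ ?_
    · filter_upwards [hκN'] with a ha
      have : condExpKernel μ m a {x | ¬ (Y0 x, Y1 x) = (Y0' x, Y1' x)} = 0 :=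
        measure_mono_null hNsub ha
      exact this
    · exact Filter.Eventually.of_forall fun a => Filter.EventuallyEq.rfl
  have hind0 : CondIndepFun m hm Y0' T (μ := μ) :=
    hunconf'.comp measurable_fst measurable_id
  have hind1 : CondIndepFun m hm Y1' T (μ := μ) :=
    hunconf'.comp measurable_snd measurable_id
  -- positivity for both denominators
  have hsum : ∀ᵐ ω ∂μ, (μ[indicT T false|m]) ω = 1 - (μ[indicT T true|m]) ω := by
    have heq : indicT T false = (fun _ => (1:ℝ)) - indicT T true := by
      funext ω
      by_cases h : T ω <;> simp [indicT, h]
    rw [heq]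
    have h1 := condExp_sub (μ := μ) (m := m) (integrable_const (1:ℝ))
      (show Integrable (indicT T true) μ by
        have : indicT T true = (T ⁻¹' {true}).indicator (fun _ => (1:ℝ)) := by
          funext ω; by_cases h : T ω = true <;> simp [indicT, h, Set.indicator_apply]
        rw [this]
        exact (integrable_const (1:ℝ)).indicator (hT (measurableSet_singleton true)))
    filter_upwards [h1] with ω hω
    simp only [Pi.sub_apply] at hω
    rw [hω, condExp_const hm (1:ℝ)]
  have hposd : ∀ t : Bool, ∀ᵐ ω ∂μ, 0 < (μ[indicT T t|m]) ω := by
    intro t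
    cases t
    · filter_upwards [hpos, hsum] with ω hω hs
      rw [hs]; linarith [hω.2]
    · filter_upwards [hpos] with ω hω
      exact hω.1
  intro t
  -- the product identity
  have hZ'meas : Measurable (if t then Y1' else Y0') := by
    cases t
    · simpa using hY0'meas
    · simpa using hY1'meas
  have hZ'int : Integrable (if t then Y1' else Y0') μ := by
    cases t
    · simpa using hY0'int
    · simpa using hY1'int
  have hZ'ind : CondIndepFun m hm (if t then Y1' else Y0') T (μ := μ) := by
    cases t
    · simpa using hind0
    · simpa using hind1
  have hkey := key_lemma hm μ hZ'meas hZ'int hT t hZ'ind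
  have hZae : (if t then Y1 else Y0) =ᵐ[μ] (if t then Y1' else Y0') := by
    cases t
    · simpa using hY0'ae
    · simpa using hY1'ae
  have hcond1 : μ[if t then Y1 else Y0|m] =ᵐ[μ] μ[if t then Y1' else Y0'|m] :=
    condExp_congr_ae hZae
  have hprodae : (fun ω' => Y ω' * indicT T t ω')
      =ᵐ[μ] (fun ω' => (if t then Y1' else Y0') ω' * indicT T t ω') := by
    filter_upwards [hZae] with ω hω
    by_cases h : T ω = t
    · have hYeq : Y ω = (if t then Y1 else Y0) ω := by
        simp only [hY, h]; cases t <;> simp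
      simp [indicT, h, hYeq, hω]
    · simp [indicT, h]
  have hcond2 : μ[fun ω' => Y ω' * indicT T t ω'|m]
      =ᵐ[μ] μ[fun ω' => (if t then Y1' else Y0') ω' * indicT T t ω'|m] :=
    condExp_congr_ae hprodae
  have hmain : ∀ᵐ ω ∂μ,
      (μ[if t then Y1 else Y0|m]) ω * (μ[indicT T t|m]) ω
        = (μ[fun ω' => Y ω' * indicT T t ω'|m]) ω := by
    filter_upwards [hkey, hcond1, hcond2] with ω h1 h2 h3
    rw [h2, h3, h1]
  refine ⟨hmain, ?_⟩
  filter_upwards [hmain, hposd t] with ω h1 h2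
  rw [eq_div_iff (ne_of_gt h2)]
  exact h1

/-- Under unconfoundedness given `X`, consistency and positivity given `X`, the conditional
mean of each potential outcome is identified from observables: for each `t ∈ {0,1}`, a.s.
`E[Y_t | σ(X)] · E[1{T=t} | σ(X)] = E[Y · 1{T=t} | σ(X)]`, equivalently
`E[Y_t | σ(X)] = E[Y · 1{T=t} | σ(X)] / E[1{T=t} | σ(X)]`. -/
theorem statement0 {Ω : Type*} [MeasurableSpace Ω] [StandardBorelSpace Ω] [Nonempty Ω]
    {d : ℕ} (μ : Measure Ω) [IsProbabilityMeasure μ]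
    (X : Ω → Fin d → ℝ) (T : Ω → Bool) (Y0 Y1 Y : Ω → ℝ)
    (hX : Measurable X) (hT : Measurable T)
    (hY0 : Integrable Y0 μ) (hY1 : Integrable Y1 μ)
    (hunconf : CondIndepFun (MeasurableSpace.comap X inferInstance) hX.comap_le
      (fun ω => (Y0 ω, Y1 ω)) T μ)
    (hpos : PositivityGiven μ X T)
    (hY : Y = fun ω => if T ω then Y1 ω else Y0 ω) :
    ∀ t : Bool,
      (∀ᵐ ω ∂μ,
        (μ[if t then Y1 else Y0 | MeasurableSpace.comap X inferInstance]) ω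
            * (μ[indicT T t | MeasurableSpace.comap X inferInstance]) ω
          = (μ[fun ω' => Y ω' * indicT T t ω' | MeasurableSpace.comap X inferInstance]) ω) ∧
      (∀ᵐ ω ∂μ,
        (μ[if t then Y1 else Y0 | MeasurableSpace.comap X inferInstance]) ω
          = (μ[fun ω' => Y ω' * indicT T t ω' | MeasurableSpace.comap X inferInstance]) ω
            / (μ[indicT T t | MeasurableSpace.comap X inferInstance]) ω) := by
  exact general_lemma hX.comap_le μ T Y0 Y1 Y hT hY0 hY1 hunconf hpos hY
end

section
/- (Backdoor adjustment identification.) Under unconfoundedness given X, consistency, and positivity given X, the average treatment effect equals the adjustment-formula ATE: E[Y1 − Y0] = E[ E[Y·1{T=1} | σ(X)] / E[1{T=1} | σ(X)] − E[Y·1{T=0} | σ(X)] / E[1{T=0} | σ(X)] ]. -/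
open MeasureTheory ProbabilityTheory

section Aux

open Set MeasurableSpace

lemma bool_measurableSpace_eq :
    (inferInstance : MeasurableSpace Bool)
      = MeasurableSpace.generateFrom {({true} : Set Bool)} := by
  refine le_antisymm (fun s _ => ?_) (MeasurableSpace.generateFrom_le fun t _ => trivial)
  have htrue : MeasurableSet[MeasurableSpace.generateFrom {({true} : Set Bool)}] {true} :=
    MeasurableSpace.measurableSet_generateFrom rfl
  have hfalse : MeasurableSet[MeasurableSpace.generateFrom {({true} : Set Bool)}] {false} := by
    have h : ({false} : Set Bool) = {true}ᶜ := by
      ext b; cases b <;> simp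
    rw [h]; exact htrue.compl
  have hs : s = ⋃ b ∈ s, {b} := by simp
  rw [hs]
  refine MeasurableSet.biUnion s.to_countable fun b _ => ?_
  cases b
  · exact hfalse
  · exact htrue

lemma measurable_indicT {Ω : Type*} [MeasurableSpace Ω] {T : Ω → Bool}
    (hT : Measurable T) (b : Bool) : Measurable (indicT T b) := by
  unfold indicT
  exact Measurable.ite (hT (MeasurableSet.singleton b)) measurable_const measurable_const

lemma integrable_indicT {Ω : Type*} [MeasurableSpace Ω] {μ : Measure Ω} [IsProbabilityMeasure μ]
    {T : Ω → Bool} (hT : Measurable T) (b : Bool) : Integrable (indicT T b) μ := by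
  refine (integrable_const (1 : ℝ)).mono' (measurable_indicT hT b).aestronglyMeasurable ?_
  refine Filter.Eventually.of_forall fun ω => ?_
  unfold indicT
  by_cases h : T ω = b <;> simp [h]

/-- Key lemma: conditional independence of `f` and `T` given `m'` implies the conditional
expectation of the product `f * indicT T b` factors. -/
lemma condexp_mul_indicT
    {Ω : Type*} {m' : MeasurableSpace Ω} [mΩ : MeasurableSpace Ω] [StandardBorelSpace Ω]
    [Nonempty Ω] (μ : Measure Ω) [IsProbabilityMeasure μ] (hm' : m' ≤ mΩ)
    {T : Ω → Bool} (hT : Measurable T) {f : Ω → ℝ} (hf : Integrable f μ)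
    (hindep : CondIndepFun m' hm' f T μ) (b : Bool) :
    μ[fun ω => f ω * indicT T b ω | m'] =ᵐ[μ]
      fun ω => (μ[f | m']) ω * (μ[indicT T b | m']) ω := by
  classical
  set κ := condExpKernel μ m' with hκ
  -- measurable modification of f
  set g : Ω → ℝ := hf.1.mk f with hg_def
  have hgm : Measurable g := hf.1.stronglyMeasurable_mk.measurable
  have hfg : f =ᵐ[μ] g := hf.1.ae_eq_mk
  -- the null set where f ≠ g
  set N : Set Ω := toMeasurable μ {x | f x ≠ g x} with hN_def
  have hN_meas : MeasurableSet N := measurableSet_toMeasurable _ _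
  have hN_null : μ N = 0 := by
    rw [measure_toMeasurable]
    exact hfg
  -- a.e. ω, κ ω N = 0
  have hκN : ∀ᵐ ω ∂μ, κ ω N = 0 := by
    have h1 : (fun ω => (κ ω N).toReal) =ᵐ[μ] μ⟦N | m'⟧ :=
      condExpKernel_ae_eq_condExp hm' hN_meas
    have h2 : (μ⟦N | m'⟧) =ᵐ[μ] 0 := by
      have hind : N.indicator (fun _ => (1 : ℝ)) =ᵐ[μ] 0 := by
        have := measure_eq_zero_iff_ae_notMem.mp hN_null
        filter_upwards [this] with x hx
        simp [Set.indicator_of_notMem hx]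
      calc (μ⟦N | m'⟧) =ᵐ[μ] μ[(0 : Ω → ℝ) | m'] := condExp_congr_ae hind
        _ = 0 := condExp_zero
    filter_upwards [h1, h2] with ω h1 h2
    have : (κ ω N).toReal = 0 := by rw [h1, h2]; rfl
    have hne : κ ω N ≠ ⊤ := measure_ne_top _ _
    exact (ENNReal.toReal_eq_zero_iff _).mp this |>.resolve_right hne
  -- a.e. ω, f = g κ ω-a.e.
  have hκfg : ∀ᵐ ω ∂μ, f =ᵐ[κ ω] g := by
    filter_upwards [hκN] with ω hω
    have h1 : ∀ᵐ x ∂κ ω, x ∉ N := measure_eq_zero_iff_ae_notMem.mp hω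
    filter_upwards [h1] with x hx
    by_contra hc
    exact hx (subset_toMeasurable _ _ hc)
  -- the countable π-system on ℝ
  set S : Set (Set ℝ) := ⋃ a : ℚ, {Iic (a : ℝ)} with hS_def
  have hS_count : S.Countable :=
    Set.countable_iUnion fun a => Set.countable_singleton _
  have hS_meas : ∀ s ∈ S, MeasurableSet s := by
    rintro s hs
    simp only [hS_def, Set.mem_iUnion, Set.mem_singleton_iff] at hs
    obtain ⟨a, rfl⟩ := hs
    exact measurableSet_Iic
  set B : Set Ω := T ⁻¹' {true} with hB_def
  -- the per-set independence statement, a.e.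
  have hAE : ∀ᵐ ω ∂μ, ∀ s ∈ S, κ ω (f ⁻¹' s ∩ B) = κ ω (f ⁻¹' s) * κ ω B := by
    rw [ae_ball_iff hS_count]
    intro s hs
    have h := hindep (f ⁻¹' s) B ⟨s, hS_meas s hs, rfl⟩ ⟨{true}, trivial, rfl⟩
    exact ae_of_ae_trim hm' h
  -- a.e. ω, IndepFun g T (κ ω)
  have hindep_ae : ∀ᵐ ω ∂μ, IndepFun g T (κ ω) := by
    filter_upwards [hAE, hκfg] with ω hω hωfg
    have htrans : ∀ s : Set ℝ, κ ω (g ⁻¹' s ∩ B) = κ ω (f ⁻¹' s ∩ B)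
        ∧ κ ω (g ⁻¹' s) = κ ω (f ⁻¹' s) := by
      intro s
      have h1 : (g ⁻¹' s ∩ B : Set Ω) =ᵐ[κ ω] (f ⁻¹' s ∩ B : Set Ω) := by
        filter_upwards [hωfg] with x hx
        exact propext (by simp only [Set.mem_inter_iff, Set.mem_preimage, hx] :
          x ∈ g ⁻¹' s ∩ B ↔ x ∈ f ⁻¹' s ∩ B)
      have h2 : (g ⁻¹' s : Set Ω) =ᵐ[κ ω] (f ⁻¹' s : Set Ω) := by
        filter_upwards [hωfg] with x hx
        exact propext (by simp only [Set.mem_preimage, hx] :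
          x ∈ g ⁻¹' s ↔ x ∈ f ⁻¹' s)
      exact ⟨measure_congr h1, measure_congr h2⟩
    have hsets : ProbabilityTheory.IndepSets { s : Set Ω | ∃ t ∈ S, g ⁻¹' t = s }
        {B} (κ ω) := by
      rintro t1 t2 ⟨s, hsS, rfl⟩ ht2
      rw [Set.mem_singleton_iff] at ht2
      subst ht2
      refine Filter.Eventually.of_forall fun a => ?_
      simp only [Kernel.const_apply]
      rw [(htrans s).1, (htrans s).2]
      exact hω s hsS
    have hpm1 : MeasurableSpace.comap g (inferInstance : MeasurableSpace ℝ)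
        = MeasurableSpace.generateFrom { s : Set Ω | ∃ t ∈ S, g ⁻¹' t = s } := by
      have hb : (inferInstance : MeasurableSpace ℝ) = MeasurableSpace.generateFrom S := by
        rw [show (inferInstance : MeasurableSpace ℝ) = borel ℝ from rfl]
        exact Real.borel_eq_generateFrom_Iic_rat
      rw [hb, MeasurableSpace.comap_generateFrom]
      rfl
    have hpm2 : MeasurableSpace.comap T (inferInstance : MeasurableSpace Bool)
        = MeasurableSpace.generateFrom {B} := by
      rw [bool_measurableSpace_eq, MeasurableSpace.comap_generateFrom, Set.image_singleton]
    exact ProbabilityTheory.IndepSets.indep hgm.comap_le hT.comap_le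
      (Real.isPiSystem_Iic_rat.comap g) (IsPiSystem.singleton B) hpm1 hpm2 hsets
  -- integrability of the product
  have hint_mul : Integrable (fun ω => f ω * indicT T b ω) μ := by
    refine hf.norm.mono' (hf.1.mul (measurable_indicT hT b).aestronglyMeasurable) ?_
    refine Filter.Eventually.of_forall fun ω => ?_
    unfold indicT
    by_cases h : T ω = b <;> simp [h, norm_nonneg]
  -- the pointwise integral identity
  have h4 : ∀ᵐ ω ∂μ, ∫ x, f x * indicT T b x ∂κ ω
      = (∫ x, f x ∂κ ω) * ∫ x, indicT T b x ∂κ ω := by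
    filter_upwards [hindep_ae, hκfg] with ω hω hωfg
    have hφ : Measurable fun x : Bool => if x = b then (1 : ℝ) else 0 := measurable_from_top
    have hgind : IndepFun g (indicT T b) (κ ω) := by
      have := hω.comp measurable_id hφ
      exact this
    have hmul : ∫ x, g x * indicT T b x ∂κ ω
        = (∫ x, g x ∂κ ω) * ∫ x, indicT T b x ∂κ ω := by
      have := IndepFun.integral_mul_eq_mul_integral hgind hgm.aestronglyMeasurable
        (measurable_indicT hT b).aestronglyMeasurable
      simpa [Pi.mul_apply] using this
    have e1 : ∫ x, f x * indicT T b x ∂κ ω = ∫ x, g x * indicT T b x ∂κ ω := by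
      refine integral_congr_ae ?_
      filter_upwards [hωfg] with x hx
      rw [hx]
    have e2 : ∫ x, f x ∂κ ω = ∫ x, g x ∂κ ω := integral_congr_ae hωfg
    rw [e1, e2, hmul]
  -- the condexp identifications
  have h1 : μ[fun ω => f ω * indicT T b ω | m'] =ᵐ[μ]
      fun ω => ∫ x, f x * indicT T b x ∂κ ω :=
    condExp_ae_eq_integral_condExpKernel hm' hint_mul
  have h2 : μ[f | m'] =ᵐ[μ] fun ω => ∫ x, f x ∂κ ω :=
    condExp_ae_eq_integral_condExpKernel hm' hf
  have h3 : μ[indicT T b | m'] =ᵐ[μ] fun ω => ∫ x, indicT T b x ∂κ ω :=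
    condExp_ae_eq_integral_condExpKernel hm' (integrable_indicT hT b)
  filter_upwards [h1, h2, h3, h4] with ω e1 e2 e3 e4
  rw [e1, e2, e3, e4]

end Aux

/-- Backdoor adjustment identification: under unconfoundedness given `X`, consistency and
positivity given `X`, the ATE `E[Y1 − Y0]` equals the adjustment-formula ATE. -/
theorem statement1 {Ω : Type*} [MeasurableSpace Ω] [StandardBorelSpace Ω] [Nonempty Ω]
    {d : ℕ} (μ : Measure Ω) [IsProbabilityMeasure μ]
    (X : Ω → Fin d → ℝ) (T : Ω → Bool) (Y0 Y1 Y : Ω → ℝ)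
    (hX : Measurable X) (hT : Measurable T)
    (hY0 : Integrable Y0 μ) (hY1 : Integrable Y1 μ)
    (hunconf : CondIndepFun (MeasurableSpace.comap X inferInstance) hX.comap_le
      (fun ω => (Y0 ω, Y1 ω)) T μ)
    (hpos : PositivityGiven μ X T)
    (hY : Y = fun ω => if T ω then Y1 ω else Y0 ω) :
    ∫ ω, (Y1 ω - Y0 ω) ∂μ = adjATE μ X T Y := by
  have hm' := hX.comap_le
  -- conditional independence of Y1, Y0 with T
  have hcY1 : CondIndepFun (MeasurableSpace.comap X inferInstance) hm' Y1 T μ := by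
    have h := hunconf.comp measurable_snd measurable_id
    exact h
  have hcY0 : CondIndepFun (MeasurableSpace.comap X inferInstance) hm' Y0 T μ := by
    have h := hunconf.comp measurable_fst measurable_id
    exact h
  have K1 := condexp_mul_indicT μ hm' hT hY1 hcY1 true
  have K0 := condexp_mul_indicT μ hm' hT hY0 hcY0 false
  -- consistency
  have hYt : (fun ω' => Y ω' * indicT T true ω') = fun ω' => Y1 ω' * indicT T true ω' := by
    funext ω
    subst hY
    cases h : T ω <;> simp [indicT, h]
  have hYf : (fun ω' => Y ω' * indicT T false ω') = fun ω' => Y0 ω' * indicT T false ω' := by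
    funext ω
    subst hY
    cases h : T ω <;> simp [indicT, h]
  -- the false indicator condexp
  have hfind : indicT T false = fun ω => 1 - indicT T true ω := by
    funext ω
    cases h : T ω <;> simp [indicT, h]
  have hce : μ[indicT T false | MeasurableSpace.comap X inferInstance] =ᵐ[μ] fun ω => 1 - (μ[indicT T true | MeasurableSpace.comap X inferInstance]) ω := by
    rw [hfind]
    have hsub : (fun ω => 1 - indicT T true ω)
        = (fun _ : Ω => (1 : ℝ)) - indicT T true := rfl
    rw [hsub]
    have h1 := condExp_sub (μ := μ) (m := MeasurableSpace.comap X inferInstance) (integrable_const (1 : ℝ))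
      (integrable_indicT hT true)
    have h2 : μ[(fun _ : Ω => (1 : ℝ)) | MeasurableSpace.comap X inferInstance] = fun _ => 1 := condExp_const hm' 1
    filter_upwards [h1] with ω hω
    rw [hω]
    simp [h2]
  have hpos' : ∀ᵐ ω ∂μ, 0 < (μ[indicT T true | MeasurableSpace.comap X inferInstance]) ω ∧ (μ[indicT T true | MeasurableSpace.comap X inferInstance]) ω < 1 := hpos
  -- the main a.e. identity for the integrand
  have hmain : (fun ω =>
      (μ[fun ω' => Y ω' * indicT T true ω' | MeasurableSpace.comap X inferInstance]) ω / (μ[indicT T true | MeasurableSpace.comap X inferInstance]) ω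
        - (μ[fun ω' => Y ω' * indicT T false ω' | MeasurableSpace.comap X inferInstance]) ω / (μ[indicT T false | MeasurableSpace.comap X inferInstance]) ω)
      =ᵐ[μ] fun ω => (μ[Y1 | MeasurableSpace.comap X inferInstance]) ω - (μ[Y0 | MeasurableSpace.comap X inferInstance]) ω := by
    rw [hYt, hYf]
    filter_upwards [K1, K0, hce, hpos'] with ω k1 k0 hec hp
    obtain ⟨hp1, hp2⟩ := hp
    rw [k1, k0, hec]
    have h1 : (μ[indicT T true | MeasurableSpace.comap X inferInstance]) ω ≠ 0 := ne_of_gt hp1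
    have h2 : (1 : ℝ) - (μ[indicT T true | MeasurableSpace.comap X inferInstance]) ω ≠ 0 := sub_ne_zero.mpr (Ne.symm (ne_of_lt hp2))
    rw [mul_div_assoc, mul_div_assoc, div_self h1, div_self h2, mul_one, mul_one]
  -- conclude
  have hADJ : adjATE μ X T Y = ∫ ω, ((μ[Y1 | MeasurableSpace.comap X inferInstance]) ω - (μ[Y0 | MeasurableSpace.comap X inferInstance]) ω) ∂μ := by
    unfold adjATE
    exact integral_congr_ae hmain
  rw [hADJ, integral_sub integrable_condExp integrable_condExp,
    integral_condExp hm', integral_condExp hm', ← integral_sub hY1 hY0]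
end

section
/- The adjustment-formula ATE is determined by the joint law of the observed data: if (X, T, Y) on (Ω, F, P) and (X', T', Y') on (Ω', F', P') are two triples of covariates, binary treatment, and integrable outcome such that the pushforward laws of (X, T, Y) under P and of (X', T', Y') under P' coincide as measures on ℝ^d × {0,1} × ℝ, and both satisfy positivity given their covariates, then A(X,T,Y) = A(X',T',Y'). -/
open MeasureTheory ProbabilityTheory

/-- Conditional expectation commutes with pushforward along `φ`, for a σ-algebra generated
by a covariate that factors through `φ`. -/
lemma condexp_map_comp {Ω E β : Type*} [MeasurableSpace Ω] [MeasurableSpace E]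
    [MeasurableSpace β] (μ : Measure Ω) [IsProbabilityMeasure μ]
    {φ : Ω → E} (hφ : AEMeasurable φ μ) {X : E → β} (hX : Measurable X)
    {Z : Ω → β} (hZ : Measurable Z) (hZX : ∀ ω, X (φ ω) = Z ω)
    {f : E → ℝ} (hf : Integrable f (μ.map φ)) :
    (fun ω => ((μ.map φ)[f | MeasurableSpace.comap X inferInstance]) (φ ω)) =ᵐ[μ]
      μ[fun ω => f (φ ω) | MeasurableSpace.comap Z inferInstance] := by
  have hXφ : X ∘ φ = Z := funext hZX
  have hcomap : (MeasurableSpace.comap X inferInstance).comap φ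
      = MeasurableSpace.comap Z inferInstance := by
    rw [MeasurableSpace.comap_comp, hXφ]
  have hm : MeasurableSpace.comap Z inferInstance ≤ (inferInstance : MeasurableSpace Ω) :=
    hZ.comap_le
  have hmE : MeasurableSpace.comap X inferInstance ≤ (inferInstance : MeasurableSpace E) :=
    hX.comap_le
  haveI : IsProbabilityMeasure (μ.map φ) := Measure.isProbabilityMeasure_map hφ
  set g := (μ.map φ)[f | MeasurableSpace.comap X inferInstance] with hg
  have hgsm : StronglyMeasurable[MeasurableSpace.comap X inferInstance] g :=
    stronglyMeasurable_condExp
  have hgν : AEStronglyMeasurable g (μ.map φ) := (hgsm.mono hmE).aestronglyMeasurable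
  have hφm : @Measurable Ω E (MeasurableSpace.comap Z inferInstance)
      (MeasurableSpace.comap X inferInstance) φ := by
    rw [measurable_iff_comap_le, hcomap]
  have hgφ_int : Integrable (fun ω => g (φ ω)) μ :=
    (integrable_map_measure hgν hφ).mp integrable_condExp
  have hfφ_int : Integrable (fun ω => f (φ ω)) μ :=
    (integrable_map_measure hf.1 hφ).mp hf
  refine ae_eq_condExp_of_forall_setIntegral_eq hm hfφ_int
    (fun s _ _ => hgφ_int.integrableOn) ?_
    ((hgsm.comp_measurable hφm).aestronglyMeasurable)
  rintro s ⟨A, hA, rfl⟩ -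
  have hpre : Z ⁻¹' A = φ ⁻¹' (X ⁻¹' A) := by rw [← hXφ]; rfl
  rw [hpre,
    ← setIntegral_map (hX hA) hgν hφ,
    ← setIntegral_map (hX hA) hf.1 hφ]
  exact setIntegral_condExp hmE hf ⟨A, hA, rfl⟩

lemma adjATE_map {Ω : Type*} [MeasurableSpace Ω] {d : ℕ} (μ : Measure Ω) [IsProbabilityMeasure μ]
    (X : Ω → Fin d → ℝ) (T : Ω → Bool) (Y : Ω → ℝ)
    (hX : Measurable X) (hT : Measurable T) (hY : Integrable Y μ) :
    adjATE μ X T Y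
      = adjATE (Measure.map (fun ω => (X ω, T ω, Y ω)) μ)
          Prod.fst (fun p => p.2.1) (fun p => p.2.2) := by
  classical
  set E := (Fin d → ℝ) × Bool × ℝ
  set φ : Ω → E := fun ω => (X ω, T ω, Y ω) with hphidef
  have hφ : AEMeasurable φ μ :=
    (hX.aemeasurable.prodMk (hT.aemeasurable.prodMk hY.1.aemeasurable))
  set ν := μ.map φ with hν
  haveI : IsProbabilityMeasure ν := Measure.isProbabilityMeasure_map hφ
  set f : Bool → E → ℝ := fun t p => p.2.2 * indicT (fun q : E => q.2.1) t p with hf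
  set g : Bool → E → ℝ := fun t => indicT (fun q : E => q.2.1) t with hg
  have hmg : ∀ t, Measurable (g t) := by
    intro t
    exact Measurable.ite ((measurable_fst.comp measurable_snd) (measurableSet_singleton t))
      measurable_const measurable_const
  have hmf : ∀ t, Measurable (f t) := fun t =>
    (measurable_snd.comp measurable_snd).mul (hmg t)
  have hgint : ∀ t, Integrable (g t) ν := by
    intro t
    refine Integrable.mono' (integrable_const 1) (hmg t).aestronglyMeasurable ?_
    filter_upwards with p
    simp only [g, indicT]
    split <;> norm_num
  have hfφint : ∀ t, Integrable (fun ω => f t (φ ω)) μ := by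
    intro t
    have h1 : AEStronglyMeasurable (fun ω => g t (φ ω)) μ :=
      ((hmg t).aestronglyMeasurable).comp_aemeasurable hφ
    have h2 : AEStronglyMeasurable (fun ω => f t (φ ω)) μ := hY.1.mul h1
    refine Integrable.mono' hY.norm h2 ?_
    filter_upwards with ω
    show ‖Y ω * (if T ω = t then (1:ℝ) else 0)‖ ≤ ‖Y ω‖
    rw [norm_mul]
    split <;> simp
  have hfint : ∀ t, Integrable (f t) ν :=
    fun t => (integrable_map_measure (hmf t).aestronglyMeasurable hφ).mpr (hfφint t)
  -- the four conditional expectation identifications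
  have ef : ∀ t, (fun ω => (ν[f t | MeasurableSpace.comap Prod.fst inferInstance]) (φ ω)) =ᵐ[μ]
      μ[fun ω => f t (φ ω) | MeasurableSpace.comap X inferInstance] :=
    fun t => condexp_map_comp μ hφ measurable_fst hX (fun _ => rfl) (hfint t)
  have eg : ∀ t, (fun ω => (ν[g t | MeasurableSpace.comap Prod.fst inferInstance]) (φ ω)) =ᵐ[μ]
      μ[fun ω => g t (φ ω) | MeasurableSpace.comap X inferInstance] :=
    fun t => condexp_map_comp μ hφ measurable_fst hX (fun _ => rfl) (hgint t)
  have hrw1 : ∀ t, (fun ω' => Y ω' * indicT T t ω') = (fun ω => f t (φ ω)) := fun t => rfl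
  have hrw2 : ∀ t, indicT T t = (fun ω => g t (φ ω)) := fun t => rfl
  rw [adjATE, adjATE, hrw1 true, hrw1 false, hrw2 true, hrw2 false]
  have hmE : MeasurableSpace.comap (Prod.fst : E → Fin d → ℝ) inferInstance
      ≤ (inferInstance : MeasurableSpace E) := measurable_fst.comap_le
  have hsm : ∀ u : E → ℝ, Measurable
      (ν[u | MeasurableSpace.comap Prod.fst inferInstance]) :=
    fun u => (stronglyMeasurable_condExp.mono hmE).measurable
  have hH : AEStronglyMeasurable (fun p =>
      (ν[f true | MeasurableSpace.comap Prod.fst inferInstance]) p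
        / (ν[g true | MeasurableSpace.comap Prod.fst inferInstance]) p
      - (ν[f false | MeasurableSpace.comap Prod.fst inferInstance]) p
        / (ν[g false | MeasurableSpace.comap Prod.fst inferInstance]) p) ν :=
    ((((hsm (f true)).div (hsm (g true))).sub
      ((hsm (f false)).div (hsm (g false)))).aestronglyMeasurable)
  have key : ∫ p, ((ν[f true | MeasurableSpace.comap Prod.fst inferInstance]) p
        / (ν[g true | MeasurableSpace.comap Prod.fst inferInstance]) p
      - (ν[f false | MeasurableSpace.comap Prod.fst inferInstance]) p
        / (ν[g false | MeasurableSpace.comap Prod.fst inferInstance]) p) ∂ν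
      = ∫ ω, ((μ[fun ω => f true (φ ω) | MeasurableSpace.comap X inferInstance]) ω
        / (μ[fun ω => g true (φ ω) | MeasurableSpace.comap X inferInstance]) ω
      - (μ[fun ω => f false (φ ω) | MeasurableSpace.comap X inferInstance]) ω
        / (μ[fun ω => g false (φ ω) | MeasurableSpace.comap X inferInstance]) ω) ∂μ := by
    rw [integral_map hφ hH]
    refine integral_congr_ae ?_
    filter_upwards [ef true, ef false, eg true, eg false] with ω h1 h2 h3 h4
    simp only [h1, h2, h3, h4]
  exact key.symm

/-- The adjustment-formula ATE is determined by the joint law of the observed data: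
if the pushforward laws of `(X, T, Y)` and `(X', T', Y')` coincide and both triples satisfy
positivity given their covariates, then their adjustment-formula ATEs coincide. -/
theorem statement3 {Ω Ω' : Type*} [MeasurableSpace Ω] [MeasurableSpace Ω'] {d : ℕ}
    (μ : Measure Ω) (μ' : Measure Ω') [IsProbabilityMeasure μ] [IsProbabilityMeasure μ']
    (X : Ω → Fin d → ℝ) (T : Ω → Bool) (Y : Ω → ℝ)
    (X' : Ω' → Fin d → ℝ) (T' : Ω' → Bool) (Y' : Ω' → ℝ)
    (hX : Measurable X) (hT : Measurable T) (hY : Integrable Y μ)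
    (hX' : Measurable X') (hT' : Measurable T') (hY' : Integrable Y' μ')
    (hpos : PositivityGiven μ X T) (hpos' : PositivityGiven μ' X' T')
    (hlaw : Measure.map (fun ω => (X ω, T ω, Y ω)) μ
      = Measure.map (fun ω' => (X' ω', T' ω', Y' ω')) μ') :
    adjATE μ X T Y = adjATE μ' X' T' Y' := by
  rw [adjATE_map μ X T Y hX hT hY, adjATE_map μ' X' T' Y' hX' hT' hY', hlaw]
end

section
/- (Honest form of Proposition 1(ii): non-identifiability of the confounding structure.) There exist, on suitable probability spaces, two models (X, T, Z_i, ε_i, Y_i), i = 1, 2, each of the form of the confounded additive model Y_i = X + T + Z_i − E[Z_i] + ε_i with Z_i independent of (X, T), ε_i ~ N(0,1) independent of (X, T, Z_i), and positivity given X, with Z_1 ~ Bernoulli(1/2) and Z_2 ~ N(1/2, 1), such that: (a) both models have conditional mean E[Y_i | σ(X,T)] = X + T P-almost surely and hence equal adjustment-formula ATE A(X,T,Y_1) = A(X,T,Y_2) = 1; (b) the potential-outcome ATE of each model (with Y_i(t) = X + t + Z_i − E[Z_i] + ε_i) equals 1; (c) E[(Y_1 − (X+T))²] = 5/4 ≠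 2 = E[(Y_2 − (X+T))²], so the conditional distributions of Y_1 and Y_2 given (X, T) differ. -/
open MeasureTheory ProbabilityTheory

noncomputable section

/-- The Bernoulli(1/2) measure on `ℝ`, giving mass 1/2 to each of 0 and 1. -/
def bernoulliHalf : Measure ℝ :=
  (1 / 2 : ENNReal) • Measure.dirac (0 : ℝ) + (1 / 2 : ENNReal) • Measure.dirac (1 : ℝ)

open MeasureTheory ProbabilityTheory Real Filter Topology
open scoped ENNReal NNReal

namespace Statement9Aux

/-! ### Real-line Gaussian integral facts -/

lemma intgb0 : Integrable (fun x : ℝ => rexp (-(1/2:ℝ) * x^2)) := integrable_exp_neg_mul_sq (by norm_num)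
lemma intgb1 : Integrable (fun x : ℝ => x * rexp (-(1/2:ℝ) * x^2)) := integrable_mul_exp_neg_mul_sq (by norm_num)
lemma intgb2 : Integrable (fun x : ℝ => x^2 * rexp (-(1/2:ℝ) * x^2)) := by
  have h := integrable_rpow_mul_exp_neg_mul_sq (b := 1/2) (by norm_num) (s := 2) (by norm_num)
  have h2 : ∀ x : ℝ, x ^ (2:ℝ) = x ^ 2 := fun x => by
    rw [show (2:ℝ) = ((2:ℕ):ℝ) by norm_num, Real.rpow_natCast]
  simpa [h2] using h

lemma tendsto_sq_atTop : Tendsto (fun x : ℝ => -(1/2:ℝ) * x^2) atTop atBot := by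
  have h1 : Tendsto (fun x : ℝ => x^2) atTop atTop := tendsto_pow_atTop (by norm_num)
  have h2 : Tendsto (fun x : ℝ => (1/2:ℝ) * x^2) atTop atTop := h1.const_mul_atTop (by norm_num)
  have h3 := tendsto_neg_atTop_atBot.comp h2
  simpa [Function.comp_def, neg_mul] using h3

lemma tendsto_exp_half_top : Tendsto (fun x : ℝ => rexp (-(1/2:ℝ) * x^2)) atTop (𝓝 0) := by
  rw [Real.tendsto_exp_comp_nhds_zero]; exact tendsto_sq_atTop

lemma tendsto_exp_half_bot : Tendsto (fun x : ℝ => rexp (-(1/2:ℝ) * x^2)) atBot (𝓝 0) := by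
  have := tendsto_exp_half_top.comp tendsto_neg_atBot_atTop
  simpa [Function.comp_def, neg_sq] using this

lemma tendsto_mul_exp_half_top : Tendsto (fun x : ℝ => x * rexp (-(1/2:ℝ) * x^2)) atTop (𝓝 0) := by
  have h := (rpow_mul_exp_neg_mul_sq_isLittleO_exp_neg (b := 1/2) (by norm_num) 1).isBigO.trans_tendsto ?_
  · simpa [Real.rpow_one] using h
  · rw [Real.tendsto_exp_comp_nhds_zero]
    have h1 : Tendsto (fun x : ℝ => (1/2:ℝ) * x) atTop atTop := tendsto_id.const_mul_atTop (by norm_num)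
    exact (tendsto_neg_atTop_atBot.comp h1).congr fun x => by simp only [Function.comp_apply]; ring

lemma tendsto_mul_exp_half_bot : Tendsto (fun x : ℝ => x * rexp (-(1/2:ℝ) * x^2)) atBot (𝓝 0) := by
  have := (tendsto_mul_exp_half_top.comp tendsto_neg_atBot_atTop).neg
  simpa [Function.comp_def, neg_sq] using this

lemma intV1 : ∫ x : ℝ, x * rexp (-(1/2:ℝ) * x^2) = 0 := by
  have hF : ∀ x : ℝ, HasDerivAt (fun x : ℝ => -rexp (-(1/2:ℝ) * x^2)) (x * rexp (-(1/2:ℝ) * x^2)) x := by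
    intro x
    have h := (((hasDerivAt_pow 2 x).const_mul (-(1/2):ℝ)).exp).neg
    exact h.congr_deriv (by push_cast; ring)
  have := MeasureTheory.integral_of_hasDerivAt_of_tendsto hF intgb1 tendsto_exp_half_bot.neg tendsto_exp_half_top.neg
  simpa using this

lemma intV2 : ∫ x : ℝ, x^2 * rexp (-(1/2:ℝ) * x^2) = Real.sqrt (2 * π) := by
  have hG : ∀ x : ℝ, HasDerivAt (fun x : ℝ => -(x * rexp (-(1/2:ℝ) * x^2)))
      ((x^2 - 1) * rexp (-(1/2:ℝ) * x^2)) x := by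
    intro x
    have h := ((hasDerivAt_id x).mul (((hasDerivAt_pow 2 x).const_mul (-(1/2):ℝ)).exp)).neg
    exact h.congr_deriv (by simp only [id]; push_cast; ring)
  have hsub : Integrable (fun x : ℝ => (x^2 - 1) * rexp (-(1/2:ℝ) * x^2)) := by
    have := intgb2.sub intgb0
    simpa [sub_mul, Pi.sub_def] using this
  have h0 := MeasureTheory.integral_of_hasDerivAt_of_tendsto hG hsub
    tendsto_mul_exp_half_bot.neg tendsto_mul_exp_half_top.neg
  simp only [neg_zero, sub_zero] at h0
  have hsplit : (fun x : ℝ => x^2 * rexp (-(1/2:ℝ) * x^2))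
      = fun x => (x^2 - 1) * rexp (-(1/2:ℝ) * x^2) + rexp (-(1/2:ℝ) * x^2) := by
    funext x; ring
  rw [hsplit, integral_add hsub intgb0, h0, zero_add]
  have := integral_gaussian (1/2 : ℝ)
  rw [this]
  rw [show π / (1/2:ℝ) = 2 * π by ring]

/-! ### Moments of the standard Gaussian measure -/

def gpdf : ℝ → ℝ := fun x => (Real.sqrt (2 * π))⁻¹ * rexp (-(1/2:ℝ) * x^2)

lemma gpdf_nonneg (x : ℝ) : 0 ≤ gpdf x :=
  mul_nonneg (inv_nonneg.2 (Real.sqrt_nonneg _)) (le_of_lt (Real.exp_pos _))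

lemma gpdf_meas : Measurable gpdf := by
  unfold gpdf; fun_prop

lemma G_eq : gaussianReal 0 1 = (volume : Measure ℝ).withDensity (fun x => ENNReal.ofReal (gpdf x)) := by
  rw [gaussianReal_of_var_ne_zero _ one_ne_zero]
  congr 1
  funext x
  rw [gaussianPDF_def]
  congr 1
  unfold gpdf
  rw [gaussianPDFReal_def]
  push_cast
  ring_nf

lemma integral_G (f : ℝ → ℝ) : ∫ x, f x ∂(gaussianReal 0 1) = ∫ x, gpdf x * f x := by
  rw [G_eq]
  have : (fun x => ENNReal.ofReal (gpdf x)) = fun x => ((gpdf x).toNNReal : ℝ≥0∞) := rfl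
  rw [this, integral_withDensity_eq_integral_smul (gpdf_meas.real_toNNReal)]
  congr 1
  funext x
  rw [NNReal.smul_def, Real.coe_toNNReal _ (gpdf_nonneg x), smul_eq_mul]

lemma integrable_G_iff (f : ℝ → ℝ) :
    Integrable f (gaussianReal 0 1) ↔ Integrable (fun x => f x * gpdf x) volume := by
  rw [G_eq]
  refine (integrable_withDensity_iff (ENNReal.measurable_ofReal.comp gpdf_meas)
    (ae_of_all _ fun x => ENNReal.ofReal_lt_top)).trans ?_
  have h : (fun x => f x * ((ENNReal.ofReal ∘ gpdf) x).toReal) = fun x => f x * gpdf x :=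
    funext fun x => by simp [ENNReal.toReal_ofReal (gpdf_nonneg x)]
  rw [h]

lemma sqrt2pi_ne : Real.sqrt (2 * π) ≠ 0 :=
  ne_of_gt (Real.sqrt_pos.2 (by positivity))

lemma Gint_id : Integrable (fun x : ℝ => x) (gaussianReal 0 1) := by
  rw [integrable_G_iff]
  have := (integrable_mul_exp_neg_mul_sq (b := 1/2) (by norm_num)).const_mul (Real.sqrt (2 * π))⁻¹
  refine this.congr (ae_of_all _ fun x => ?_)
  unfold gpdf; ring

lemma Gint_sq : Integrable (fun x : ℝ => x^2) (gaussianReal 0 1) := by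
  rw [integrable_G_iff]
  refine (intgb2.const_mul (Real.sqrt (2 * π))⁻¹).congr (ae_of_all _ fun x => ?_)
  unfold gpdf; ring

lemma Gmean : ∫ x, x ∂(gaussianReal 0 1) = 0 := by
  rw [integral_G]
  have : (fun x => gpdf x * x) = fun x => (Real.sqrt (2 * π))⁻¹ * (x * rexp (-(1/2:ℝ) * x^2)) := by
    funext x; unfold gpdf; ring
  rw [this, integral_const_mul, intV1, mul_zero]

lemma Gsq : ∫ x, x^2 ∂(gaussianReal 0 1) = 1 := by
  rw [integral_G]
  have : (fun x => gpdf x * x^2) = fun x => (Real.sqrt (2 * π))⁻¹ * (x^2 * rexp (-(1/2:ℝ) * x^2)) := by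
    funext x; unfold gpdf; ring
  rw [this, integral_const_mul, intV2, inv_mul_cancel₀ sqrt2pi_ne]

/-! ### Bernoulli and coin measures -/

def coin : Measure Bool :=
  (1 / 2 : ENNReal) • Measure.dirac true + (1 / 2 : ENNReal) • Measure.dirac false

instance : IsProbabilityMeasure bernoulliHalf := by
  constructor; simp [bernoulliHalf]; rw [← ENNReal.add_halves 1]; norm_num

instance : IsProbabilityMeasure coin := by
  constructor; simp [coin]; rw [← ENNReal.add_halves 1]; norm_num

lemma integrable_dirac'' {α : Type*} [MeasurableSpace α] {f : α → ℝ} (hf : StronglyMeasurable f)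
    (a : α) : Integrable f (Measure.dirac a) := by
  refine ⟨hf.aestronglyMeasurable, ?_⟩
  rw [HasFiniteIntegral, lintegral_dirac' a hf.measurable.enorm]
  exact enorm_lt_top

lemma integrable_bern {f : ℝ → ℝ} (hf : StronglyMeasurable f) : Integrable f bernoulliHalf := by
  rw [bernoulliHalf, integrable_add_measure]
  exact ⟨(integrable_dirac'' hf 0).smul_measure (by norm_num),
    (integrable_dirac'' hf 1).smul_measure (by norm_num)⟩

lemma integral_bern {f : ℝ → ℝ} (hf : StronglyMeasurable f) :
    ∫ x, f x ∂bernoulliHalf = (f 0 + f 1) / 2 := by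
  rw [bernoulliHalf, integral_add_measure
    ((integrable_dirac'' hf 0).smul_measure (by norm_num))
    ((integrable_dirac'' hf 1).smul_measure (by norm_num)),
    integral_smul_measure, integral_smul_measure, integral_dirac, integral_dirac]
  norm_num [ENNReal.toReal_div]
  ring

lemma integrable_coin (f : Bool → ℝ) : Integrable f coin := by
  have hf : StronglyMeasurable f := (Measurable.of_discrete (f := f)).stronglyMeasurable
  rw [coin, integrable_add_measure]
  exact ⟨(integrable_dirac'' hf true).smul_measure (by norm_num),
    (integrable_dirac'' hf false).smul_measure (by norm_num)⟩

lemma integral_coin (f : Bool → ℝ) : ∫ x, f x ∂coin = (f true + f false) / 2 := by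
  have hf : StronglyMeasurable f := (Measurable.of_discrete (f := f)).stronglyMeasurable
  rw [coin, integral_add_measure
    ((integrable_dirac'' hf true).smul_measure (by norm_num))
    ((integrable_dirac'' hf false).smul_measure (by norm_num)),
    integral_smul_measure, integral_smul_measure, integral_dirac, integral_dirac]
  norm_num [ENNReal.toReal_div]
  ring

/-! ### Independence helpers -/

lemma indepFun_fst_snd' {α β : Type*} [MeasurableSpace α] [MeasurableSpace β]
    (ν : Measure α) (ρ : Measure β) [IsProbabilityMeasure ν] [IsProbabilityMeasure ρ] :
    IndepFun Prod.fst Prod.snd (ν.prod ρ) := by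
  rw [indepFun_iff_measure_inter_preimage_eq_mul]
  intro s t hs ht
  rw [← Set.prod_eq, Measure.prod_prod,
    show (Prod.fst ⁻¹' s : Set (α × β)) = s ×ˢ Set.univ from (Set.prod_univ).symm,
    show (Prod.snd ⁻¹' t : Set (α × β)) = Set.univ ×ˢ t from (Set.univ_prod).symm,
    Measure.prod_prod, Measure.prod_prod]
  simp [measure_univ]

lemma indep_pull {Ω Ω' α β : Type*} [MeasurableSpace Ω] [MeasurableSpace Ω'] [MeasurableSpace α]
    [MeasurableSpace β] {μ : Measure Ω} {F : Ω → Ω'} (hF : Measurable F) {f : Ω' → α} {g : Ω' → β}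
    (hf : Measurable f) (hg : Measurable g) (h : IndepFun f g (μ.map F)) :
    IndepFun (fun ω => f (F ω)) (fun ω => g (F ω)) μ := by
  rw [indepFun_iff_measure_inter_preimage_eq_mul] at h ⊢
  intro s t hs ht
  have h2 := h s t hs ht
  rw [Measure.map_apply hF (hf hs), Measure.map_apply hF (hg ht),
    Measure.map_apply hF ((hf hs).inter (hg ht)), Set.preimage_inter] at h2
  exact h2

/-! ### The probability space -/

abbrev Om : Type := (Bool × ℝ × ℝ) × ℝ × ℝ

def nu1 : Measure (Bool × ℝ × ℝ) := coin.prod (bernoulliHalf.prod (gaussianReal 0 1))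
def nu2 : Measure (ℝ × ℝ) := (gaussianReal 0 1).prod (gaussianReal 0 1)
def mu : Measure Om := nu1.prod nu2

instance : IsProbabilityMeasure nu1 := by unfold nu1; infer_instance
instance : IsProbabilityMeasure nu2 := by unfold nu2; infer_instance
instance : IsProbabilityMeasure mu := by unfold mu; infer_instance

def fX : Om → ℝ := fun _ => 0
def fT : Om → Bool := fun ω => ω.1.1
def fZ₁ : Om → ℝ := fun ω => ω.1.2.1
def fW : Om → ℝ := fun ω => ω.1.2.2
def fZ₂ : Om → ℝ := fun ω => ω.1.2.2 + 1/2
def fe₁ : Om → ℝ := fun ω => ω.2.1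
def fe₂ : Om → ℝ := fun ω => ω.2.2

lemma mfX : Measurable fX := measurable_const
lemma mfT : Measurable fT := measurable_fst.comp measurable_fst
lemma mfZ₁ : Measurable fZ₁ := (measurable_fst.comp measurable_snd).comp measurable_fst
lemma mfW : Measurable fW := (measurable_snd.comp measurable_snd).comp measurable_fst
lemma mfZ₂ : Measurable fZ₂ := mfW.add_const _
lemma mfe₁ : Measurable fe₁ := measurable_fst.comp measurable_snd
lemma mfe₂ : Measurable fe₂ := measurable_snd.comp measurable_snd

lemma map_fst_mu : mu.map Prod.fst = nu1 := by
  rw [mu, Measure.map_fst_prod]; simp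

lemma map_snd_mu : mu.map Prod.snd = nu2 := by
  rw [mu, Measure.map_snd_prod]; simp

lemma law_T : mu.map fT = coin := by
  rw [show fT = Prod.fst ∘ (Prod.fst : Om → Bool × ℝ × ℝ) from rfl,
    ← Measure.map_map measurable_fst measurable_fst, map_fst_mu, nu1, Measure.map_fst_prod]
  simp

lemma coin_ft : coin {false, true} = 1 := by
  rw [show ({false, true} : Set Bool) = Set.univ from by ext b; cases b <;> simp]
  exact measure_univ

lemma law_Z₁ : mu.map fZ₁ = bernoulliHalf := by
  rw [show fZ₁ = (Prod.fst ∘ Prod.snd) ∘ (Prod.fst : Om → Bool × ℝ × ℝ) from rfl,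
    ← Measure.map_map (measurable_fst.comp measurable_snd) measurable_fst, map_fst_mu, nu1,
    ← Measure.map_map measurable_fst measurable_snd, Measure.map_snd_prod]
  simp [Measure.map_fst_prod, coin_ft]

lemma law_W : mu.map fW = gaussianReal 0 1 := by
  rw [show fW = (Prod.snd ∘ Prod.snd) ∘ (Prod.fst : Om → Bool × ℝ × ℝ) from rfl,
    ← Measure.map_map (measurable_snd.comp measurable_snd) measurable_fst, map_fst_mu, nu1,
    ← Measure.map_map measurable_snd measurable_snd, Measure.map_snd_prod]
  simp [Measure.map_snd_prod, coin_ft]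

lemma law_e₁ : mu.map fe₁ = gaussianReal 0 1 := by
  rw [show fe₁ = Prod.fst ∘ (Prod.snd : Om → ℝ × ℝ) from rfl,
    ← Measure.map_map measurable_fst measurable_snd, map_snd_mu, nu2, Measure.map_fst_prod]
  simp

lemma law_e₂ : mu.map fe₂ = gaussianReal 0 1 := by
  rw [show fe₂ = Prod.snd ∘ (Prod.snd : Om → ℝ × ℝ) from rfl,
    ← Measure.map_map measurable_snd measurable_snd, map_snd_mu, nu2, Measure.map_snd_prod]
  simp

lemma law_Z₂ : mu.map fZ₂ = gaussianReal (1/2) 1 := by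
  rw [show fZ₂ = (fun x => x + 1/2) ∘ fW from rfl,
    ← Measure.map_map (measurable_add_const _) mfW, law_W, gaussianReal_map_add_const]
  norm_num

/-! ### Integral transfers -/

lemma integrable_comp {V : Om → ℝ} (hV : Measurable V) {f : ℝ → ℝ} (hf : Measurable f)
    (h : Integrable f (mu.map V)) : Integrable (fun ω => f (V ω)) mu :=
  (integrable_map_measure hf.stronglyMeasurable.aestronglyMeasurable hV.aemeasurable).mp h

lemma integral_comp {V : Om → ℝ} (hV : Measurable V) {f : ℝ → ℝ} (hf : Measurable f) :
    ∫ ω, f (V ω) ∂mu = ∫ x, f x ∂(mu.map V) :=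
  (integral_map hV.aemeasurable hf.stronglyMeasurable.aestronglyMeasurable).symm

lemma gauss_pack {V : Om → ℝ} (hV : Measurable V) (hlaw : mu.map V = gaussianReal 0 1) :
    Integrable V mu ∧ Integrable (fun ω => V ω ^ 2) mu ∧
      (∫ ω, V ω ∂mu) = 0 ∧ (∫ ω, V ω ^ 2 ∂mu) = 1 := by
  have hsq : Measurable fun x : ℝ => x ^ 2 := by measurability
  refine ⟨?_, ?_, ?_, ?_⟩
  · exact integrable_comp hV measurable_id (hlaw ▸ Gint_id)
  · exact integrable_comp hV hsq (hlaw ▸ Gint_sq)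
  · have h : ∫ ω, V ω ∂mu = ∫ x, x ∂(mu.map V) := integral_comp hV measurable_id
    rw [h, hlaw]; exact Gmean
  · have h : ∫ ω, V ω ^ 2 ∂mu = ∫ x, x ^ 2 ∂(mu.map V) := integral_comp hV hsq
    rw [h, hlaw]; exact Gsq

lemma intgZ₁ : Integrable fZ₁ mu :=
  integrable_comp mfZ₁ measurable_id (law_Z₁ ▸ integrable_bern stronglyMeasurable_id)

lemma intZ₁ : ∫ ω, fZ₁ ω ∂mu = 1/2 := by
  have h : ∫ ω, fZ₁ ω ∂mu = ∫ x, x ∂(mu.map fZ₁) := integral_comp mfZ₁ measurable_id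
  have hb : ∫ x : ℝ, x ∂bernoulliHalf = ((0:ℝ) + 1) / 2 := integral_bern stronglyMeasurable_id
  rw [h, law_Z₁, hb]
  norm_num

lemma intZ₁sq : ∫ ω, (fZ₁ ω - 1/2) ^ 2 ∂mu = 1/4 := by
  have hf : Measurable (fun x : ℝ => (x - 1/2)^2) := by measurability
  have h : ∫ ω, (fZ₁ ω - 1/2) ^ 2 ∂mu = ∫ x, (x - 1/2) ^ 2 ∂(mu.map fZ₁) :=
    integral_comp mfZ₁ hf
  rw [h, law_Z₁, integral_bern hf.stronglyMeasurable]
  norm_num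

lemma intgZ₁sq : Integrable (fun ω => (fZ₁ ω - 1/2) ^ 2) mu := by
  have hf : Measurable (fun x : ℝ => (x - 1/2)^2) := by measurability
  exact integrable_comp mfZ₁ hf (law_Z₁ ▸ integrable_bern hf.stronglyMeasurable)

lemma intgZ₁c : Integrable (fun ω => fZ₁ ω - 1/2) mu := intgZ₁.sub (integrable_const _)

lemma intZ₁c : ∫ ω, (fZ₁ ω - 1/2) ∂mu = 0 := by
  rw [integral_sub intgZ₁ (integrable_const _), intZ₁, integral_const]; simp

lemma intgW : Integrable fW mu := (gauss_pack mfW law_W).1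
lemma intW : ∫ ω, fW ω ∂mu = 0 := (gauss_pack mfW law_W).2.2.1
lemma intgWsq : Integrable (fun ω => fW ω ^ 2) mu := (gauss_pack mfW law_W).2.1
lemma intWsq : ∫ ω, fW ω ^ 2 ∂mu = 1 := (gauss_pack mfW law_W).2.2.2
lemma intge₁ : Integrable fe₁ mu := (gauss_pack mfe₁ law_e₁).1
lemma inte₁ : ∫ ω, fe₁ ω ∂mu = 0 := (gauss_pack mfe₁ law_e₁).2.2.1
lemma intge₁sq : Integrable (fun ω => fe₁ ω ^ 2) mu := (gauss_pack mfe₁ law_e₁).2.1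
lemma inte₁sq : ∫ ω, fe₁ ω ^ 2 ∂mu = 1 := (gauss_pack mfe₁ law_e₁).2.2.2
lemma intge₂ : Integrable fe₂ mu := (gauss_pack mfe₂ law_e₂).1
lemma inte₂ : ∫ ω, fe₂ ω ∂mu = 0 := (gauss_pack mfe₂ law_e₂).2.2.1
lemma intge₂sq : Integrable (fun ω => fe₂ ω ^ 2) mu := (gauss_pack mfe₂ law_e₂).2.1
lemma inte₂sq : ∫ ω, fe₂ ω ^ 2 ∂mu = 1 := (gauss_pack mfe₂ law_e₂).2.2.2

lemma intgZ₂ : Integrable fZ₂ mu := intgW.add (integrable_const _)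
lemma intZ₂ : ∫ ω, fZ₂ ω ∂mu = 1/2 := by
  have : fZ₂ = fun ω => fW ω + 1/2 := rfl
  rw [this, integral_add intgW (integrable_const _), intW, integral_const]; simp

/-! ### Independence of the coordinates -/

lemma hI3 : IndepFun (fun ω => (fX ω, fT ω, fZ₁ ω)) fe₁ mu := by
  have h : IndepFun ((fun p : Bool × ℝ × ℝ => ((0:ℝ), p.1, p.2.1)) ∘ (Prod.fst : Om → Bool × ℝ × ℝ))
      ((Prod.fst : ℝ × ℝ → ℝ) ∘ (Prod.snd : Om → ℝ × ℝ)) mu :=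
    (indepFun_fst_snd' nu1 nu2).comp
      (measurable_const.prodMk (measurable_fst.prodMk (measurable_fst.comp measurable_snd)))
      measurable_fst
  exact h

lemma hI4 : IndepFun (fun ω => (fX ω, fT ω, fZ₂ ω)) fe₂ mu := by
  have h : IndepFun
      ((fun p : Bool × ℝ × ℝ => ((0:ℝ), p.1, p.2.2 + 1/2)) ∘ (Prod.fst : Om → Bool × ℝ × ℝ))
      ((Prod.snd : ℝ × ℝ → ℝ) ∘ (Prod.snd : Om → ℝ × ℝ)) mu :=
    (indepFun_fst_snd' nu1 nu2).comp
      (measurable_const.prodMk (measurable_fst.prodMk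
        ((measurable_snd.comp measurable_snd).add_const _)))
      measurable_snd
  exact h

lemma hI1 : IndepFun (fun ω => (fX ω, fT ω)) fZ₁ mu := by
  have h0 : IndepFun ((fun b : Bool => ((0:ℝ), b)) ∘ (Prod.fst : Bool × ℝ × ℝ → Bool))
      ((Prod.fst : ℝ × ℝ → ℝ) ∘ (Prod.snd : Bool × ℝ × ℝ → ℝ × ℝ)) nu1 :=
    (indepFun_fst_snd' coin (bernoulliHalf.prod (gaussianReal 0 1))).comp
      (measurable_const.prodMk measurable_id) measurable_fst
  have h1 : IndepFun (fun p : Bool × ℝ × ℝ => ((0:ℝ), p.1)) (fun p : Bool × ℝ × ℝ => p.2.1)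
      (mu.map Prod.fst) := by rw [map_fst_mu]; exact h0
  exact indep_pull measurable_fst
    (measurable_const.prodMk measurable_fst) (measurable_fst.comp measurable_snd) h1

lemma hI2 : IndepFun (fun ω => (fX ω, fT ω)) fZ₂ mu := by
  have h0 : IndepFun ((fun b : Bool => ((0:ℝ), b)) ∘ (Prod.fst : Bool × ℝ × ℝ → Bool))
      ((fun p : ℝ × ℝ => p.2 + 1/2) ∘ (Prod.snd : Bool × ℝ × ℝ → ℝ × ℝ)) nu1 :=
    (indepFun_fst_snd' coin (bernoulliHalf.prod (gaussianReal 0 1))).comp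
      (measurable_const.prodMk measurable_id) (measurable_snd.add_const _)
  have h1 : IndepFun (fun p : Bool × ℝ × ℝ => ((0:ℝ), p.1)) (fun p : Bool × ℝ × ℝ => p.2.2 + 1/2)
      (mu.map Prod.fst) := by rw [map_fst_mu]; exact h0
  exact indep_pull measurable_fst
    (measurable_const.prodMk measurable_fst) ((measurable_snd.comp measurable_snd).add_const _) h1

lemma hIWe₂ : IndepFun fW fe₂ mu := by
  have h : IndepFun ((fun p : Bool × ℝ × ℝ => p.2.2) ∘ (Prod.fst : Om → Bool × ℝ × ℝ))
      ((Prod.snd : ℝ × ℝ → ℝ) ∘ (Prod.snd : Om → ℝ × ℝ)) mu :=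
    (indepFun_fst_snd' nu1 nu2).comp (measurable_snd.comp measurable_snd) measurable_snd
  exact h

lemma hIZ₁e₁ : IndepFun fZ₁ fe₁ mu := by
  have h : IndepFun ((fun p : Bool × ℝ × ℝ => p.2.1) ∘ (Prod.fst : Om → Bool × ℝ × ℝ))
      ((Prod.fst : ℝ × ℝ → ℝ) ∘ (Prod.snd : Om → ℝ × ℝ)) mu :=
    (indepFun_fst_snd' nu1 nu2).comp (measurable_fst.comp measurable_snd) measurable_fst
  exact h

/-! ### Integrals of functions of T -/

lemma int_compT (f : Bool → ℝ) : ∫ ω, f (fT ω) ∂mu = (f true + f false) / 2 := by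
  have h : ∫ ω, f (fT ω) ∂mu = ∫ b, f b ∂(mu.map fT) :=
    (integral_map mfT.aemeasurable
      ((Measurable.of_discrete (f := f)).stronglyMeasurable.aestronglyMeasurable)).symm
  rw [h, law_T, integral_coin]

lemma intg_compT (f : Bool → ℝ) : Integrable (fun ω => f (fT ω)) mu :=
  (integrable_map_measure ((Measurable.of_discrete (f := f)).stronglyMeasurable.aestronglyMeasurable)
    mfT.aemeasurable).mp (law_T ▸ integrable_coin f)

lemma int_iT : ∫ ω, indicT fT true ω ∂mu = 1/2 := by
  have h := int_compT (fun b => if b = true then (1:ℝ) else 0)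
  simpa [indicT] using h

lemma int_jT : ∫ ω, indicT fT false ω ∂mu = 1/2 := by
  have h := int_compT (fun b => if b = false then (1:ℝ) else 0)
  simpa [indicT] using h

lemma intg_iT : Integrable (indicT fT true) mu := intg_compT (fun b => if b = true then (1:ℝ) else 0)
lemma intg_jT : Integrable (indicT fT false) mu := intg_compT (fun b => if b = false then (1:ℝ) else 0)

/-! ### Conditional expectation given (X, T) -/

lemma condexp_XT {Z ε : Om → ℝ} (c : ℝ) (hZm : Measurable Z) (hεm : Measurable ε)
    (hZint : Integrable Z mu) (hεint : Integrable ε mu)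
    (hZi : IndepFun (fun ω => (fX ω, fT ω)) (fun ω => Z ω - c) mu)
    (hεi : IndepFun (fun ω => (fX ω, fT ω)) ε mu)
    (hZmean : ∫ ω, Z ω ∂mu = c) (hεmean : ∫ ω, ε ω ∂mu = 0) :
    mu[(fun ω => fX ω + indicT fT true ω + Z ω - c + ε ω) |
        MeasurableSpace.comap (fun ω => (fX ω, fT ω)) inferInstance]
      =ᵐ[mu] fun ω => fX ω + indicT fT true ω := by
  have hm : MeasurableSpace.comap (fun ω : Om => (fX ω, fT ω)) inferInstance
      ≤ (Prod.instMeasurableSpace : MeasurableSpace Om) :=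
    (measurable_const.prodMk mfT : Measurable fun ω : Om => (fX ω, fT ω)).comap_le
  haveI : SigmaFinite (mu.trim hm) := inferInstance
  have hg : Measurable (fun p : ℝ × Bool => p.1 + if p.2 = true then (1:ℝ) else 0) := by
    apply measurable_fst.add
    exact measurable_const.ite (measurable_snd (measurableSet_singleton true)) measurable_const
  have hA_sm : StronglyMeasurable[MeasurableSpace.comap (fun ω : Om => (fX ω, fT ω)) inferInstance]
      (fun ω => fX ω + indicT fT true ω) :=
    (hg.comp (Measurable.of_comap_le le_rfl)).stronglyMeasurable
  have hA_int : Integrable (fun ω => fX ω + indicT fT true ω) mu :=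
    (integrable_const (0:ℝ)).add intg_iT
  have hB₁_int : Integrable (fun ω => Z ω - c) mu := hZint.sub (integrable_const c)
  have hsplit : (fun ω => fX ω + indicT fT true ω + Z ω - c + ε ω)
      = (fun ω => fX ω + indicT fT true ω) + ((fun ω => Z ω - c) + ε) := by
    funext ω; show _ = _ + ((Z ω - c) + ε ω); ring
  rw [hsplit]
  have h1 := condExp_add (μ := mu)
    (m := MeasurableSpace.comap (fun ω : Om => (fX ω, fT ω)) inferInstance)
    hA_int (hB₁_int.add hεint)
  have h2 := condExp_add (μ := mu)
    (m := MeasurableSpace.comap (fun ω : Om => (fX ω, fT ω)) inferInstance)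
    hB₁_int hεint
  have hA : mu[(fun ω => fX ω + indicT fT true ω)|
      MeasurableSpace.comap (fun ω : Om => (fX ω, fT ω)) inferInstance]
      = fun ω => fX ω + indicT fT true ω :=
    condExp_of_stronglyMeasurable (μ := mu) hm hA_sm hA_int
  have hB₁ : mu[(fun ω => Z ω - c)|
      MeasurableSpace.comap (fun ω : Om => (fX ω, fT ω)) inferInstance]
      =ᵐ[mu] fun _ => ∫ ω, (Z ω - c) ∂mu := by
    refine condExp_indep_eq ((hZm.sub measurable_const).comap_le) hm
      ((Measurable.of_comap_le le_rfl).stronglyMeasurable) ?_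
    exact (IndepFun_iff_Indep _ _ _).mp hZi.symm
  have hB₂ : mu[ε|MeasurableSpace.comap (fun ω : Om => (fX ω, fT ω)) inferInstance]
      =ᵐ[mu] fun _ => ∫ ω, ε ω ∂mu := by
    refine condExp_indep_eq (hεm.comap_le) hm
      ((Measurable.of_comap_le le_rfl).stronglyMeasurable) ?_
    exact (IndepFun_iff_Indep _ _ _).mp hεi.symm
  have hv1 : ∫ ω, (Z ω - c) ∂mu = 0 := by
    rw [integral_sub hZint (integrable_const c), hZmean, integral_const]; simp
  filter_upwards [h1, h2, hB₁, hB₂] with ω e1 e2 e3 e4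
  rw [e1]
  simp only [Pi.add_apply, e2, hA, Pi.add_apply, e3, e4, hv1, hεmean]
  ring

/-! ### adjATE and positivity -/

lemma comapX_bot : MeasurableSpace.comap fX inferInstance = (⊥ : MeasurableSpace Om) :=
  MeasurableSpace.comap_const 0

lemma positivity_mu : PositivityGiven mu fX fT := by
  unfold PositivityGiven
  rw [comapX_bot, condExp_bot]
  refine ae_of_all _ fun ω => ?_
  simp only [int_iT]
  norm_num

lemma adj_val {Z ε : Om → ℝ} (c : ℝ)
    (hZint : Integrable Z mu) (hεint : Integrable ε mu)
    (hZiT : IndepFun (fun ω => Z ω - c) (indicT fT true) mu)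
    (hZjT : IndepFun (fun ω => Z ω - c) (indicT fT false) mu)
    (hεiT : IndepFun ε (indicT fT true) mu)
    (hεjT : IndepFun ε (indicT fT false) mu)
    (hZmean : ∫ ω, Z ω ∂mu = c) (hεmean : ∫ ω, ε ω ∂mu = 0) :
    adjATE mu fX fT (fun ω => fX ω + indicT fT true ω + Z ω - c + ε ω) = 1 := by
  have hB₁int : Integrable (fun ω => Z ω - c) mu := hZint.sub (integrable_const c)
  have hv1 : ∫ ω, (Z ω - c) ∂mu = 0 := by
    rw [integral_sub hZint (integrable_const c), hZmean, integral_const]; simp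
  have hYi : ∫ ω, (fX ω + indicT fT true ω + Z ω - c + ε ω) * indicT fT true ω ∂mu = 1/2 := by
    have he : (fun ω => (fX ω + indicT fT true ω + Z ω - c + ε ω) * indicT fT true ω)
        = fun ω => indicT fT true ω + ((Z ω - c) * indicT fT true ω + ε ω * indicT fT true ω) := by
      funext ω
      by_cases h : fT ω = true <;> simp [indicT, fX, h] <;> ring
    have ha : Integrable (fun ω => (Z ω - c) * indicT fT true ω) mu :=
      hZiT.integrable_mul hB₁int intg_iT
    have hb : Integrable (fun ω => ε ω * indicT fT true ω) mu :=
      hεiT.integrable_mul hεint intg_iT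
    have hab : Integrable (fun ω => (Z ω - c) * indicT fT true ω + ε ω * indicT fT true ω) mu :=
      ha.add hb
    have hma : ∫ ω, (Z ω - c) * indicT fT true ω ∂mu
        = (∫ ω, (Z ω - c) ∂mu) * ∫ ω, indicT fT true ω ∂mu :=
      hZiT.integral_mul_eq_mul_integral hB₁int.1 intg_iT.1
    have hmb : ∫ ω, ε ω * indicT fT true ω ∂mu
        = (∫ ω, ε ω ∂mu) * ∫ ω, indicT fT true ω ∂mu :=
      hεiT.integral_mul_eq_mul_integral hεint.1 intg_iT.1
    rw [he, integral_add intg_iT hab, integral_add ha hb, hma, hmb, hv1, hεmean, int_iT]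
    norm_num
  have hYj : ∫ ω, (fX ω + indicT fT true ω + Z ω - c + ε ω) * indicT fT false ω ∂mu = 0 := by
    have he : (fun ω => (fX ω + indicT fT true ω + Z ω - c + ε ω) * indicT fT false ω)
        = fun ω => (Z ω - c) * indicT fT false ω + ε ω * indicT fT false ω := by
      funext ω
      by_cases h : fT ω = true <;> simp [indicT, fX, h] <;> ring
    have ha : Integrable (fun ω => (Z ω - c) * indicT fT false ω) mu :=
      hZjT.integrable_mul hB₁int intg_jT
    have hb : Integrable (fun ω => ε ω * indicT fT false ω) mu :=
      hεjT.integrable_mul hεint intg_jT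
    have hma : ∫ ω, (Z ω - c) * indicT fT false ω ∂mu
        = (∫ ω, (Z ω - c) ∂mu) * ∫ ω, indicT fT false ω ∂mu :=
      hZjT.integral_mul_eq_mul_integral hB₁int.1 intg_jT.1
    have hmb : ∫ ω, ε ω * indicT fT false ω ∂mu
        = (∫ ω, ε ω ∂mu) * ∫ ω, indicT fT false ω ∂mu :=
      hεjT.integral_mul_eq_mul_integral hεint.1 intg_jT.1
    rw [he, integral_add ha hb, hma, hmb, hv1, hεmean]
    norm_num
  unfold adjATE
  rw [comapX_bot, condExp_bot, condExp_bot, condExp_bot, condExp_bot]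
  simp only [hYi, hYj, int_iT, int_jT, integral_const]
  simp

/-! ### Second moments -/

lemma sqmom {A B : Om → ℝ} (v : ℝ)
    (hA2 : Integrable (fun ω => A ω ^ 2) mu) (hAB : Integrable (fun ω => A ω * B ω) mu)
    (hB2 : Integrable (fun ω => B ω ^ 2) mu)
    (hABv : ∫ ω, A ω * B ω ∂mu = 0) (hA2v : ∫ ω, A ω ^ 2 ∂mu = v)
    (hB2v : ∫ ω, B ω ^ 2 ∂mu = 1) :
    (∫ ω, (A ω + B ω) ^ 2 ∂mu = v + 1) ∧ Integrable (fun ω => (A ω + B ω) ^ 2) mu := by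
  have he : (fun ω => (A ω + B ω) ^ 2)
      = fun ω => A ω ^ 2 + (2 * (A ω * B ω) + B ω ^ 2) := by funext ω; ring
  have hg2 : Integrable (fun ω => 2 * (A ω * B ω) + B ω ^ 2) mu := (hAB.const_mul 2).add hB2
  constructor
  · rw [he, integral_add hA2 hg2, integral_add (hAB.const_mul 2) hB2,
      integral_const_mul 2 (fun ω => A ω * B ω), hABv, hA2v, hB2v]
    ring
  · rw [he]; exact hA2.add hg2

/-! ### condDistrib disintegration -/

lemma key_int {Y : Om → ℝ} (hY : Measurable Y)
    (hint : Integrable (fun ω => (Y ω - (fX ω + indicT fT true ω)) ^ 2) mu) :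
    ∫ b, ∫ y, ((y - (b.1 + if b.2 = true then (1:ℝ) else 0)) ^ 2)
        ∂(condDistrib Y (fun ω => (fX ω, fT ω)) mu b) ∂(mu.map fun ω => (fX ω, fT ω))
      = ∫ ω, (Y ω - (fX ω + indicT fT true ω)) ^ 2 ∂mu := by
  have hg : Measurable fun p : (ℝ × Bool) × ℝ =>
      (p.2 - (p.1.1 + if p.1.2 = true then (1:ℝ) else 0)) ^ 2 := by
    apply Measurable.pow_const
    apply Measurable.sub measurable_snd
    apply Measurable.add (measurable_fst.comp measurable_fst)
    exact measurable_const.ite ((measurable_snd.comp measurable_fst) (measurableSet_singleton true))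
      measurable_const
  have hXY : Measurable fun ω : Om => ((fX ω, fT ω), Y ω) :=
    (measurable_const.prodMk mfT).prodMk hY
  have hρint : Integrable (fun p : (ℝ × Bool) × ℝ =>
      (p.2 - (p.1.1 + if p.1.2 = true then (1:ℝ) else 0)) ^ 2)
      (mu.map fun ω => ((fX ω, fT ω), Y ω)) :=
    (integrable_map_measure hg.stronglyMeasurable.aestronglyMeasurable hXY.aemeasurable).mpr hint
  rw [condDistrib, ← Measure.fst_map_prodMk (X := fun ω : Om => (fX ω, fT ω)) hY,
    Measure.integral_condKernel hρint]
  exact integral_map hXY.aemeasurable hg.stronglyMeasurable.aestronglyMeasurable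

end Statement9Aux

open Statement9Aux


/-- Honest form of Proposition 1(ii): non-identifiability of the confounding structure.
There exist two confounded additive models `Y_i = X + T + Z_i − E[Z_i] + ε_i` (with
`Z₁ ~ Bernoulli(1/2)`, `Z₂ ~ N(1/2,1)`, `ε_i ~ N(0,1)`, the stated independences and
positivity given `X`) such that (a) both have conditional mean `X + T` given `σ(X,T)` and
equal adjustment-formula ATE `1`; (b) both potential-outcome ATEs equal `1`; and (c)
`E[(Y₁−(X+T))²] = 5/4 ≠ 2 = E[(Y₂−(X+T))²]`, so the conditional distributions of `Y₁` and
`Y₂` given `(X,T)` differ. -/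
theorem statement9 : ∃ (Ω : Type) (_ : MeasurableSpace Ω) (μ : Measure Ω)
    (hP : IsProbabilityMeasure μ),
    ∃ (X : Ω → ℝ) (T : Ω → Bool) (Z₁ Z₂ ε₁ ε₂ Y₁ Y₂ : Ω → ℝ),
      Measurable X ∧ Measurable T ∧
      Integrable Z₁ μ ∧ Integrable Z₂ μ ∧
      Y₁ = (fun ω => X ω + indicT T true ω + Z₁ ω - (∫ ω', Z₁ ω' ∂μ) + ε₁ ω) ∧
      Y₂ = (fun ω => X ω + indicT T true ω + Z₂ ω - (∫ ω', Z₂ ω' ∂μ) + ε₂ ω) ∧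
      IndepFun (fun ω => (X ω, T ω)) Z₁ μ ∧
      IndepFun (fun ω => (X ω, T ω)) Z₂ μ ∧
      Measure.map ε₁ μ = gaussianReal 0 1 ∧
      Measure.map ε₂ μ = gaussianReal 0 1 ∧
      IndepFun (fun ω => (X ω, T ω, Z₁ ω)) ε₁ μ ∧
      IndepFun (fun ω => (X ω, T ω, Z₂ ω)) ε₂ μ ∧
      PositivityGiven μ X T ∧
      Measure.map Z₁ μ = bernoulliHalf ∧
      Measure.map Z₂ μ = gaussianReal (1 / 2) 1 ∧
      -- (a) equal conditional means and equal adjustment-formula ATEs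
      (μ[Y₁ | MeasurableSpace.comap (fun ω => (X ω, T ω)) inferInstance]
          =ᵐ[μ] fun ω => X ω + indicT T true ω) ∧
      (μ[Y₂ | MeasurableSpace.comap (fun ω => (X ω, T ω)) inferInstance]
          =ᵐ[μ] fun ω => X ω + indicT T true ω) ∧
      adjATE μ X T Y₁ = 1 ∧ adjATE μ X T Y₂ = 1 ∧
      -- (b) the potential-outcome ATE of each model equals 1
      (∫ ω, ((X ω + 1 + Z₁ ω - (∫ ω', Z₁ ω' ∂μ) + ε₁ ω)
            - (X ω + 0 + Z₁ ω - (∫ ω', Z₁ ω' ∂μ) + ε₁ ω)) ∂μ = 1) ∧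
      (∫ ω, ((X ω + 1 + Z₂ ω - (∫ ω', Z₂ ω' ∂μ) + ε₂ ω)
            - (X ω + 0 + Z₂ ω - (∫ ω', Z₂ ω' ∂μ) + ε₂ ω)) ∂μ = 1) ∧
      -- (c) the second conditional moments differ, so the conditional distributions differ
      (∫ ω, (Y₁ ω - (X ω + indicT T true ω)) ^ 2 ∂μ = 5 / 4) ∧
      (∫ ω, (Y₂ ω - (X ω + indicT T true ω)) ^ 2 ∂μ = 2) ∧
      ¬ (∀ᵐ b ∂(Measure.map (fun ω => (X ω, T ω)) μ),
          (@condDistrib Ω (ℝ × Bool) ℝ _ _ _ _ _ Y₁ (fun ω => (X ω, T ω)) μ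
              (by haveI := hP; exact inferInstance : IsFiniteMeasure μ)) b
            = (@condDistrib Ω (ℝ × Bool) ℝ _ _ _ _ _ Y₂ (fun ω => (X ω, T ω)) μ
              (by haveI := hP; exact inferInstance : IsFiniteMeasure μ)) b) := by
  classical
  refine ⟨Om, inferInstance, mu, inferInstance, fX, fT, fZ₁, fZ₂, fe₁, fe₂,
    (fun ω => fX ω + indicT fT true ω + fZ₁ ω - (∫ ω', fZ₁ ω' ∂mu) + fe₁ ω),
    (fun ω => fX ω + indicT fT true ω + fZ₂ ω - (∫ ω', fZ₂ ω' ∂mu) + fe₂ ω),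
    mfX, mfT, intgZ₁, intgZ₂, rfl, rfl, hI1, hI2, law_e₁, law_e₂, hI3, hI4,
    positivity_mu, law_Z₁, law_Z₂, ?_, ?_, ?_, ?_, ?_, ?_, ?_, ?_, ?_⟩
  -- some shared facts
  case _ =>  -- conditional mean of Y₁
    refine condexp_XT _ mfZ₁ mfe₁ intgZ₁ intge₁ ?_ ?_ rfl inte₁
    · have h : IndepFun ((id : ℝ × Bool → ℝ × Bool) ∘ (fun ω => (fX ω, fT ω)))
          ((fun x : ℝ => x - (∫ ω', fZ₁ ω' ∂mu)) ∘ fZ₁) mu :=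
        hI1.comp measurable_id (measurable_id.sub_const _)
      exact h
    · have h : IndepFun ((fun p : ℝ × Bool × ℝ => (p.1, p.2.1)) ∘ (fun ω => (fX ω, fT ω, fZ₁ ω)))
          ((id : ℝ → ℝ) ∘ fe₁) mu :=
        hI3.comp (measurable_fst.prodMk (measurable_fst.comp measurable_snd)) measurable_id
      exact h
  case _ =>  -- conditional mean of Y₂
    refine condexp_XT _ mfZ₂ mfe₂ intgZ₂ intge₂ ?_ ?_ rfl inte₂
    · have h : IndepFun ((id : ℝ × Bool → ℝ × Bool) ∘ (fun ω => (fX ω, fT ω)))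
          ((fun x : ℝ => x - (∫ ω', fZ₂ ω' ∂mu)) ∘ fZ₂) mu :=
        hI2.comp measurable_id (measurable_id.sub_const _)
      exact h
    · have h : IndepFun ((fun p : ℝ × Bool × ℝ => (p.1, p.2.1)) ∘ (fun ω => (fX ω, fT ω, fZ₂ ω)))
          ((id : ℝ → ℝ) ∘ fe₂) mu :=
        hI4.comp (measurable_fst.prodMk (measurable_fst.comp measurable_snd)) measurable_id
      exact h
  case _ =>  -- adjATE of Y₁
    have hmi : Measurable fun p : ℝ × Bool => if p.2 = true then (1:ℝ) else 0 :=
      measurable_const.ite (measurable_snd (measurableSet_singleton true)) measurable_const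
    have hmj : Measurable fun p : ℝ × Bool => if p.2 = false then (1:ℝ) else 0 :=
      measurable_const.ite (measurable_snd (measurableSet_singleton false)) measurable_const
    have hmε : Measurable fun p : ℝ × Bool × ℝ => if p.2.1 = true then (1:ℝ) else 0 :=
      measurable_const.ite ((measurable_fst.comp measurable_snd) (measurableSet_singleton true))
        measurable_const
    have hmε' : Measurable fun p : ℝ × Bool × ℝ => if p.2.1 = false then (1:ℝ) else 0 :=
      measurable_const.ite ((measurable_fst.comp measurable_snd) (measurableSet_singleton false))
        measurable_const
    refine adj_val _ intgZ₁ intge₁ ?_ ?_ ?_ ?_ rfl inte₁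
    · have h : IndepFun ((fun x : ℝ => x - (∫ ω', fZ₁ ω' ∂mu)) ∘ fZ₁)
          ((fun p : ℝ × Bool => if p.2 = true then (1:ℝ) else 0) ∘ (fun ω => (fX ω, fT ω))) mu :=
        hI1.symm.comp (measurable_id.sub_const _) hmi
      exact h
    · have h : IndepFun ((fun x : ℝ => x - (∫ ω', fZ₁ ω' ∂mu)) ∘ fZ₁)
          ((fun p : ℝ × Bool => if p.2 = false then (1:ℝ) else 0) ∘ (fun ω => (fX ω, fT ω))) mu :=
        hI1.symm.comp (measurable_id.sub_const _) hmj
      exact h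
    · have h : IndepFun ((id : ℝ → ℝ) ∘ fe₁)
          ((fun p : ℝ × Bool × ℝ => if p.2.1 = true then (1:ℝ) else 0)
            ∘ (fun ω => (fX ω, fT ω, fZ₁ ω))) mu :=
        hI3.symm.comp measurable_id hmε
      exact h
    · have h : IndepFun ((id : ℝ → ℝ) ∘ fe₁)
          ((fun p : ℝ × Bool × ℝ => if p.2.1 = false then (1:ℝ) else 0)
            ∘ (fun ω => (fX ω, fT ω, fZ₁ ω))) mu :=
        hI3.symm.comp measurable_id hmε'
      exact h
  case _ =>  -- adjATE of Y₂
    have hmi : Measurable fun p : ℝ × Bool => if p.2 = true then (1:ℝ) else 0 :=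
      measurable_const.ite (measurable_snd (measurableSet_singleton true)) measurable_const
    have hmj : Measurable fun p : ℝ × Bool => if p.2 = false then (1:ℝ) else 0 :=
      measurable_const.ite (measurable_snd (measurableSet_singleton false)) measurable_const
    have hmε : Measurable fun p : ℝ × Bool × ℝ => if p.2.1 = true then (1:ℝ) else 0 :=
      measurable_const.ite ((measurable_fst.comp measurable_snd) (measurableSet_singleton true))
        measurable_const
    have hmε' : Measurable fun p : ℝ × Bool × ℝ => if p.2.1 = false then (1:ℝ) else 0 :=
      measurable_const.ite ((measurable_fst.comp measurable_snd) (measurableSet_singleton false))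
        measurable_const
    refine adj_val _ intgZ₂ intge₂ ?_ ?_ ?_ ?_ rfl inte₂
    · have h : IndepFun ((fun x : ℝ => x - (∫ ω', fZ₂ ω' ∂mu)) ∘ fZ₂)
          ((fun p : ℝ × Bool => if p.2 = true then (1:ℝ) else 0) ∘ (fun ω => (fX ω, fT ω))) mu :=
        hI2.symm.comp (measurable_id.sub_const _) hmi
      exact h
    · have h : IndepFun ((fun x : ℝ => x - (∫ ω', fZ₂ ω' ∂mu)) ∘ fZ₂)
          ((fun p : ℝ × Bool => if p.2 = false then (1:ℝ) else 0) ∘ (fun ω => (fX ω, fT ω))) mu :=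
        hI2.symm.comp (measurable_id.sub_const _) hmj
      exact h
    · have h : IndepFun ((id : ℝ → ℝ) ∘ fe₂)
          ((fun p : ℝ × Bool × ℝ => if p.2.1 = true then (1:ℝ) else 0)
            ∘ (fun ω => (fX ω, fT ω, fZ₂ ω))) mu :=
        hI4.symm.comp measurable_id hmε
      exact h
    · have h : IndepFun ((id : ℝ → ℝ) ∘ fe₂)
          ((fun p : ℝ × Bool × ℝ => if p.2.1 = false then (1:ℝ) else 0)
            ∘ (fun ω => (fX ω, fT ω, fZ₂ ω))) mu :=
        hI4.symm.comp measurable_id hmε'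
      exact h
  case _ =>  -- potential outcome ATE of model 1
    rw [integral_congr_ae (g := fun _ : Om => (1:ℝ)) (ae_of_all _ fun ω => by ring)]
    simp
  case _ =>  -- potential outcome ATE of model 2
    rw [integral_congr_ae (g := fun _ : Om => (1:ℝ)) (ae_of_all _ fun ω => by ring)]
    simp
  case _ =>  -- second moment of model 1
    rw [intZ₁]
    rw [integral_congr_ae (g := fun ω => ((fZ₁ ω - 1/2) + fe₁ ω)^2)
      (ae_of_all _ fun ω => by ring)]
    have hind : IndepFun (fun ω => fZ₁ ω - 1/2) fe₁ mu := by
      have h : IndepFun ((fun x : ℝ => x - 1/2) ∘ fZ₁) ((id : ℝ → ℝ) ∘ fe₁) mu :=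
        hIZ₁e₁.comp (measurable_id.sub_const _) measurable_id
      exact h
    have hAB : Integrable (fun ω => (fZ₁ ω - 1/2) * fe₁ ω) mu :=
      hind.integrable_mul intgZ₁c intge₁
    have hABv : ∫ ω, (fZ₁ ω - 1/2) * fe₁ ω ∂mu = 0 := by
      have h : ∫ ω, (fZ₁ ω - 1/2) * fe₁ ω ∂mu
          = (∫ ω, (fZ₁ ω - 1/2) ∂mu) * ∫ ω, fe₁ ω ∂mu :=
        hind.integral_mul_eq_mul_integral intgZ₁c.1 intge₁.1
      rw [h, intZ₁c, zero_mul]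
    have := (sqmom (1/4) intgZ₁sq hAB intge₁sq hABv intZ₁sq inte₁sq).1
    rw [this]
    norm_num
  case _ =>  -- second moment of model 2
    rw [intZ₂]
    rw [integral_congr_ae (g := fun ω => (fW ω + fe₂ ω)^2)
      (ae_of_all _ fun ω => by simp only [fZ₂, fW, fX]; ring)]
    have hAB : Integrable (fun ω => fW ω * fe₂ ω) mu :=
      hIWe₂.integrable_mul intgW intge₂
    have hABv : ∫ ω, fW ω * fe₂ ω ∂mu = 0 := by
      have h : ∫ ω, fW ω * fe₂ ω ∂mu = (∫ ω, fW ω ∂mu) * ∫ ω, fe₂ ω ∂mu :=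
        hIWe₂.integral_mul_eq_mul_integral intgW.1 intge₂.1
      rw [h, intW, zero_mul]
    have := (sqmom 1 intgWsq hAB intge₂sq hABv intWsq inte₂sq).1
    rw [this]
    norm_num
  case _ =>  -- the conditional distributions differ
    intro h
    set Y₁ : Om → ℝ := fun ω => fX ω + indicT fT true ω + fZ₁ ω - (∫ ω', fZ₁ ω' ∂mu) + fe₁ ω
      with hY₁def
    set Y₂ : Om → ℝ := fun ω => fX ω + indicT fT true ω + fZ₂ ω - (∫ ω', fZ₂ ω' ∂mu) + fe₂ ω
      with hY₂def
    have hmiT : Measurable (indicT fT true) := by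
      unfold indicT
      exact measurable_const.ite (mfT (measurableSet_singleton true)) measurable_const
    have hY₁m : Measurable Y₁ := (((mfX.add hmiT).add mfZ₁).sub_const _).add mfe₁
    have hY₂m : Measurable Y₂ := (((mfX.add hmiT).add mfZ₂).sub_const _).add mfe₂
    -- integrability and values of the second moments
    have hind₁ : IndepFun (fun ω => fZ₁ ω - 1/2) fe₁ mu := by
      have h' : IndepFun ((fun x : ℝ => x - 1/2) ∘ fZ₁) ((id : ℝ → ℝ) ∘ fe₁) mu :=
        hIZ₁e₁.comp (measurable_id.sub_const _) measurable_id
      exact h'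
    have hAB₁ : Integrable (fun ω => (fZ₁ ω - 1/2) * fe₁ ω) mu :=
      hind₁.integrable_mul intgZ₁c intge₁
    have hABv₁ : ∫ ω, (fZ₁ ω - 1/2) * fe₁ ω ∂mu = 0 := by
      have h' : ∫ ω, (fZ₁ ω - 1/2) * fe₁ ω ∂mu
          = (∫ ω, (fZ₁ ω - 1/2) ∂mu) * ∫ ω, fe₁ ω ∂mu :=
        hind₁.integral_mul_eq_mul_integral intgZ₁c.1 intge₁.1
      rw [h', intZ₁c, zero_mul]
    have hsq₁ := sqmom (1/4) intgZ₁sq hAB₁ intge₁sq hABv₁ intZ₁sq inte₁sq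
    have hAB₂ : Integrable (fun ω => fW ω * fe₂ ω) mu :=
      hIWe₂.integrable_mul intgW intge₂
    have hABv₂ : ∫ ω, fW ω * fe₂ ω ∂mu = 0 := by
      have h' : ∫ ω, fW ω * fe₂ ω ∂mu = (∫ ω, fW ω ∂mu) * ∫ ω, fe₂ ω ∂mu :=
        hIWe₂.integral_mul_eq_mul_integral intgW.1 intge₂.1
      rw [h', intW, zero_mul]
    have hsq₂ := sqmom 1 intgWsq hAB₂ intge₂sq hABv₂ intWsq inte₂sq
    have he₁ : (fun ω => ((fZ₁ ω - 1/2) + fe₁ ω)^2)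
        =ᵐ[mu] fun ω => (Y₁ ω - (fX ω + indicT fT true ω))^2 :=
      ae_of_all _ fun ω => by rw [hY₁def]; simp only [intZ₁]; ring
    have he₂ : (fun ω => (fW ω + fe₂ ω)^2)
        =ᵐ[mu] fun ω => (Y₂ ω - (fX ω + indicT fT true ω))^2 :=
      ae_of_all _ fun ω => by rw [hY₂def]; simp only [intZ₂]; simp only [fZ₂, fW, fX]; ring
    have hint₁ : Integrable (fun ω => (Y₁ ω - (fX ω + indicT fT true ω))^2) mu :=
      hsq₁.2.congr he₁
    have hint₂ : Integrable (fun ω => (Y₂ ω - (fX ω + indicT fT true ω))^2) mu :=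
      hsq₂.2.congr he₂
    have hval₁ : ∫ ω, (Y₁ ω - (fX ω + indicT fT true ω))^2 ∂mu = 5/4 := by
      rw [← integral_congr_ae he₁, hsq₁.1]; norm_num
    have hval₂ : ∫ ω, (Y₂ ω - (fX ω + indicT fT true ω))^2 ∂mu = 2 := by
      rw [← integral_congr_ae he₂, hsq₂.1]; norm_num
    have k₁ := key_int hY₁m hint₁
    have k₂ := key_int hY₂m hint₂
    have heq : ∫ b, ∫ y, ((y - (b.1 + if b.2 = true then (1:ℝ) else 0)) ^ 2)
          ∂(condDistrib Y₁ (fun ω => (fX ω, fT ω)) mu b) ∂(mu.map fun ω => (fX ω, fT ω))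
        = ∫ b, ∫ y, ((y - (b.1 + if b.2 = true then (1:ℝ) else 0)) ^ 2)
          ∂(condDistrib Y₂ (fun ω => (fX ω, fT ω)) mu b) ∂(mu.map fun ω => (fX ω, fT ω)) := by
      refine integral_congr_ae (h.mono fun b hb => ?_)
      simp only [hb]
    have : (5/4 : ℝ) = 2 := by rw [← hval₁, ← k₁, heq, k₂, hval₂]
    norm_num at this

end
end
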